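/- arXiv:1605.01384 — 10 statements merged into one kernel-verified Lean document; each statement's English description precedes it below -/
import Mathlib

section
/- Let (Ω, 𝓕, P) be a probability space, d ≥ 1, and let b : ℝ^d → ℝ^d be continuous and satisfy the one-sided Lipschitz condition with constant m > 0, i.e. ⟨b(x) − b(y), x − y⟩ ≤ −m‖x − y‖² for all x, y. Let W, X, Y : [0,∞) × Ω → ℝ^d be stochastic processes with continuous sample paths such that almost surely, for all t ≥ 0, X_t = X_0 + ∫₀ᵗ b(X_s) ds + √2 W_t and Y_t = Y_0 + ∫₀ᵗ b(Y_s) ds + √2 W_t. If E‖X_0 − Y_0‖² < ∞, then for every T ≥ 0, E‖X_T − Y_T‖² ≤ e^{−2mT} E‖X_0 − Y_0‖². -/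
open MeasureTheory
open scoped RealInnerProductSpace

/-- Exponential contraction in mean square for two solutions of the Langevin-type
SDE (in pathwise integral form) driven by the same noise, under a one-sided
Lipschitz (strong monotonicity) drift condition. -/
theorem meanSquare_contraction
    {Ω : Type*} [MeasurableSpace Ω] (P : Measure Ω) [IsProbabilityMeasure P]
    {d : ℕ} (hd : 1 ≤ d)
    (b : EuclideanSpace ℝ (Fin d) → EuclideanSpace ℝ (Fin d))
    (hb_cont : Continuous b)
    (m : ℝ) (hm : 0 < m)
    (hb : ∀ x y : EuclideanSpace ℝ (Fin d), ⟪b x - b y, x - y⟫ ≤ -m * ‖x - y‖ ^ 2)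
    (W X Y : ℝ → Ω → EuclideanSpace ℝ (Fin d))
    (hW_meas : ∀ t, Measurable (W t))
    (hX_meas : ∀ t, Measurable (X t))
    (hY_meas : ∀ t, Measurable (Y t))
    (hX_cont : ∀ ω, Continuous fun t => X t ω)
    (hY_cont : ∀ ω, Continuous fun t => Y t ω)
    (hW_cont : ∀ ω, Continuous fun t => W t ω)
    (hXY : ∀ᵐ ω ∂P, ∀ t : ℝ, 0 ≤ t →
      (X t ω = X 0 ω + (∫ s in (0:ℝ)..t, b (X s ω)) + Real.sqrt 2 • W t ω) ∧
      (Y t ω = Y 0 ω + (∫ s in (0:ℝ)..t, b (Y s ω)) + Real.sqrt 2 • W t ω))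
    (h_int : Integrable (fun ω => ‖X 0 ω - Y 0 ω‖ ^ 2) P) :
    ∀ T : ℝ, 0 ≤ T →
      (∫ ω, ‖X T ω - Y T ω‖ ^ 2 ∂P) ≤
        Real.exp (-(2 * m) * T) * ∫ ω, ‖X 0 ω - Y 0 ω‖ ^ 2 ∂P := by
  intro T hT
  -- pathwise bound
  have key : ∀ᵐ ω ∂P, ‖X T ω - Y T ω‖ ^ 2 ≤
      Real.exp (-(2 * m) * T) * ‖X 0 ω - Y 0 ω‖ ^ 2 := by
    filter_upwards [hXY] with ω hω
    set v : ℝ → EuclideanSpace ℝ (Fin d) := fun s => b (X s ω) - b (Y s ω) with hv_def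
    have hvX : Continuous fun s => b (X s ω) := hb_cont.comp (hX_cont ω)
    have hvY : Continuous fun s => b (Y s ω) := hb_cont.comp (hY_cont ω)
    have hv : Continuous v := hvX.sub hvY
    set ζ : ℝ → EuclideanSpace ℝ (Fin d) :=
      fun t => (X 0 ω - Y 0 ω) + ∫ s in (0:ℝ)..t, v s with hζ_def
    have hζ_deriv : ∀ t, HasDerivAt ζ (v t) t := by
      intro t
      have h := intervalIntegral.integral_hasDerivAt_right
        (hv.intervalIntegrable 0 t)
        hv.aestronglyMeasurable.stronglyMeasurableAtFilter
        hv.continuousAt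
      exact h.const_add _
    have hζ_eq : ∀ t, 0 ≤ t → ζ t = X t ω - Y t ω := by
      intro t ht
      obtain ⟨hX, hY⟩ := hω t ht
      have hiX : IntervalIntegrable (fun s => b (X s ω)) MeasureTheory.volume 0 t :=
        hvX.intervalIntegrable 0 t
      have hiY : IntervalIntegrable (fun s => b (Y s ω)) MeasureTheory.volume 0 t :=
        hvY.intervalIntegrable 0 t
      rw [hX, hY, hζ_def]
      simp only [hv_def, intervalIntegral.integral_sub hiX hiY]
      abel
    set φ : ℝ → ℝ := fun t => ‖ζ t‖ ^ 2 with hφ_def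
    have hφ_deriv : ∀ t, HasDerivAt φ (2 * ⟪v t, ζ t⟫) t := by
      intro t
      have h := HasDerivAt.inner ℝ (hζ_deriv t) (hζ_deriv t)
      have heq : (fun s => ⟪ζ s, ζ s⟫) = φ := by
        funext s; rw [hφ_def, real_inner_self_eq_norm_sq]
      rw [heq] at h
      rw [real_inner_comm (v t) (ζ t), ← two_mul] at h
      exact h
    set ψ : ℝ → ℝ := fun t => Real.exp (2 * m * t) * φ t with hψ_def
    have hψ_deriv : ∀ t, HasDerivAt ψ
        (Real.exp (2 * m * t) * (2 * m) * φ t + Real.exp (2 * m * t) * (2 * ⟪v t, ζ t⟫)) t := by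
      intro t
      have hlin : HasDerivAt (fun y : ℝ => 2 * m * y) (2 * m) t := by
        simpa using (hasDerivAt_id t).const_mul (2 * m)
      exact hlin.exp.mul (hφ_deriv t)
    have hψ_anti : AntitoneOn ψ (Set.Icc 0 T) := by
      apply antitoneOn_of_deriv_nonpos (convex_Icc 0 T)
      · exact fun t _ => ((hψ_deriv t).continuousAt).continuousWithinAt
      · exact fun t _ => ((hψ_deriv t).differentiableAt).differentiableWithinAt
      · intro t ht
        rw [interior_Icc] at ht
        rw [(hψ_deriv t).deriv]
        have hζt : ζ t = X t ω - Y t ω := hζ_eq t ht.1.le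
        have hip : ⟪v t, ζ t⟫ ≤ -m * ‖ζ t‖ ^ 2 := by
          rw [hζt]; exact hb (X t ω) (Y t ω)
        have hexp : (0:ℝ) < Real.exp (2 * m * t) := Real.exp_pos _
        have hφt : φ t = ‖ζ t‖ ^ 2 := rfl
        have h2 : Real.exp (2 * m * t) * ⟪v t, ζ t⟫ ≤
            Real.exp (2 * m * t) * (-m * ‖ζ t‖ ^ 2) :=
          mul_le_mul_of_nonneg_left hip hexp.le
        rw [hφt]
        nlinarith
    have h0 : ψ 0 = ‖X 0 ω - Y 0 ω‖ ^ 2 := by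
      simp [hψ_def, hφ_def, hζ_def]
    have hTψ : ψ T = Real.exp (2 * m * T) * ‖X T ω - Y T ω‖ ^ 2 := by
      rw [hψ_def]; simp only [hφ_def, hζ_eq T hT]
    have hle : ψ T ≤ ψ 0 := by
      rcases eq_or_lt_of_le hT with h | h
      · simp [← h]
      · exact hψ_anti (Set.left_mem_Icc.2 hT) ⟨hT, le_refl T⟩ hT
    rw [h0, hTψ] at hle
    have hexp : (0:ℝ) < Real.exp (2 * m * T) := Real.exp_pos _
    rw [neg_mul, Real.exp_neg, inv_mul_eq_div, le_div_iff₀ hexp, mul_comm]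
    exact hle
  have hg_int : Integrable (fun ω => Real.exp (-(2 * m) * T) * ‖X 0 ω - Y 0 ω‖ ^ 2) P :=
    h_int.const_mul _
  have hf_meas : AEStronglyMeasurable (fun ω => ‖X T ω - Y T ω‖ ^ 2) P :=
    ((((hX_meas T).sub (hY_meas T)).norm.pow_const 2)).aestronglyMeasurable
  have hf_int : Integrable (fun ω => ‖X T ω - Y T ω‖ ^ 2) P := by
    refine hg_int.mono' hf_meas ?_
    filter_upwards [key] with ω hω
    rwa [Real.norm_eq_abs, abs_of_nonneg (by positivity)]
  calc (∫ ω, ‖X T ω - Y T ω‖ ^ 2 ∂P)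
      ≤ ∫ ω, Real.exp (-(2 * m) * T) * ‖X 0 ω - Y 0 ω‖ ^ 2 ∂P :=
        integral_mono_ae hf_int hg_int key
    _ = Real.exp (-(2 * m) * T) * ∫ ω, ‖X 0 ω - Y 0 ω‖ ^ 2 ∂P := integral_const_mul _ _
end

section
/- Let (Ω, 𝓕, P) be a probability space, d ≥ 1, and let b : ℝ^d → ℝ^d be continuous and satisfy ⟨b(x) − b(y), x − y⟩ ≤ −m‖x − y‖² for all x, y, with m > 0. Let W, X, Y : [0,∞) × Ω → ℝ^d be stochastic processes with continuous sample paths such that almost surely, for all t ≥ 0, X_t = X_0 + ∫₀ᵗ b(X_s) ds + √2 W_t and Y_t = Y_0 + ∫₀ᵗ b(Y_s) ds + √2 W_t, and assume E‖X_0 − Y_0‖² < ∞. Let g : ℝ^d → ℝ be Lipschitz with Lipschitz constant Lip(g). Then for every T ≥ 0, E|g(X_T) − g(Y_T)|² ≤ Lip(g)² e^{−2mT} E‖X_0 − Y_0‖². -/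
open MeasureTheory
open scoped RealInnerProductSpace

/-- Deterministic contraction lemma: if `z t = z 0 + ∫₀ᵗ h` where along the way
`⟪h t, z t⟫ ≤ -m ‖z t‖²`, then `‖z T‖² ≤ exp (-(2m) T) ‖z 0‖²`. -/
theorem det_contraction {d : ℕ}
    (b : EuclideanSpace ℝ (Fin d) → EuclideanSpace ℝ (Fin d))
    (hb_cont : Continuous b) (m : ℝ)
    (hb : ∀ x y : EuclideanSpace ℝ (Fin d), ⟪b x - b y, x - y⟫ ≤ -m * ‖x - y‖ ^ 2)
    (x y : ℝ → EuclideanSpace ℝ (Fin d))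
    (hx : Continuous x) (hy : Continuous y)
    (hxy : ∀ t : ℝ, 0 ≤ t →
      x t - y t = (x 0 - y 0) + ∫ s in (0:ℝ)..t, (b (x s) - b (y s)))
    (T : ℝ) (hT : 0 ≤ T) :
    ‖x T - y T‖ ^ 2 ≤ Real.exp (-(2 * m) * T) * ‖x 0 - y 0‖ ^ 2 := by
  set h : ℝ → EuclideanSpace ℝ (Fin d) := fun s => b (x s) - b (y s) with hh
  have hhc : Continuous h := (hb_cont.comp hx).sub (hb_cont.comp hy)
  set F : ℝ → EuclideanSpace ℝ (Fin d) :=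
    fun t => (x 0 - y 0) + ∫ s in (0:ℝ)..t, h s with hF
  have hFeq : ∀ t : ℝ, 0 ≤ t → F t = x t - y t := fun t ht => (hxy t ht).symm
  have hF' : ∀ t : ℝ, HasDerivAt F (h t) t := by
    intro t
    exact (intervalIntegral.integral_hasDerivAt_right
      (hhc.intervalIntegrable 0 t)
      hhc.stronglyMeasurable.stronglyMeasurableAtFilter
      hhc.continuousAt).const_add _
  set ψ : ℝ → ℝ := fun t => ⟪F t, F t⟫ with hψ
  have hψ' : ∀ t : ℝ, HasDerivAt ψ (⟪F t, h t⟫ + ⟪h t, F t⟫) t := fun t =>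
    HasDerivAt.inner ℝ (hF' t) (hF' t)
  have hψnorm : ∀ t, ψ t = ‖F t‖ ^ 2 := fun t => real_inner_self_eq_norm_sq (F t)
  have key : ∀ t ∈ Set.Icc (0:ℝ) T,
      ψ t ≤ gronwallBound (ψ 0) (-(2 * m)) 0 (t - 0) := by
    apply le_gronwallBound_of_liminf_deriv_right_le
      (f' := fun t => ⟪F t, h t⟫ + ⟪h t, F t⟫)
    · exact fun t _ => ((hψ' t).continuousAt).continuousWithinAt
    · intro s hs r hr
      exact ((hψ' s).hasDerivWithinAt).liminf_right_slope_le hr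
    · exact le_refl _
    · intro s hs
      have hs0 : (0:ℝ) ≤ s := hs.1
      have hFs : F s = x s - y s := hFeq s hs0
      have hinner : ⟪h s, F s⟫ ≤ -m * ‖F s‖ ^ 2 := by
        rw [hFs]; exact hb (x s) (y s)
      have : ⟪F s, h s⟫ + ⟪h s, F s⟫ ≤ 2 * (-m * ‖F s‖ ^ 2) := by
        have hc : ⟪F s, h s⟫ = ⟪h s, F s⟫ := real_inner_comm _ _
        linarith
      calc ⟪F s, h s⟫ + ⟪h s, F s⟫ ≤ 2 * (-m * ‖F s‖ ^ 2) := this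
        _ = -(2 * m) * ψ s + 0 := by rw [hψnorm s]; ring
  have hT' := key T ⟨le_refl 0 |>.trans hT, le_refl T⟩
  rw [gronwallBound_ε0, sub_zero] at hT'
  have hF0 : F 0 = x 0 - y 0 := by simp [hF]
  have hFT : F T = x T - y T := hFeq T hT
  calc ‖x T - y T‖ ^ 2 = ψ T := by rw [hψnorm T, hFT]
    _ ≤ ψ 0 * Real.exp (-(2 * m) * T) := hT'
    _ = Real.exp (-(2 * m) * T) * ‖x 0 - y 0‖ ^ 2 := by
        rw [hψnorm 0, hF0]; ring

/-- Variance-type bound for a Lipschitz observable evaluated at two coupled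
solutions of the Langevin-type SDE driven by the same Brownian path, under a
one-sided Lipschitz (strong monotonicity) drift condition. -/
theorem lipschitz_observable_contraction
    {Ω : Type*} [MeasurableSpace Ω] (P : Measure Ω) [IsProbabilityMeasure P]
    {d : ℕ} (hd : 1 ≤ d)
    (b : EuclideanSpace ℝ (Fin d) → EuclideanSpace ℝ (Fin d))
    (hb_cont : Continuous b)
    (m : ℝ) (hm : 0 < m)
    (hb : ∀ x y : EuclideanSpace ℝ (Fin d), ⟪b x - b y, x - y⟫ ≤ -m * ‖x - y‖ ^ 2)
    (W X Y : ℝ → Ω → EuclideanSpace ℝ (Fin d))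
    (hW_meas : ∀ t, Measurable (W t))
    (hX_meas : ∀ t, Measurable (X t))
    (hY_meas : ∀ t, Measurable (Y t))
    (hX_cont : ∀ ω, Continuous fun t => X t ω)
    (hY_cont : ∀ ω, Continuous fun t => Y t ω)
    (hW_cont : ∀ ω, Continuous fun t => W t ω)
    (hXY : ∀ᵐ ω ∂P, ∀ t : ℝ, 0 ≤ t →
      (X t ω = X 0 ω + (∫ s in (0:ℝ)..t, b (X s ω)) + Real.sqrt 2 • W t ω) ∧
      (Y t ω = Y 0 ω + (∫ s in (0:ℝ)..t, b (Y s ω)) + Real.sqrt 2 • W t ω))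
    (h_int : Integrable (fun ω => ‖X 0 ω - Y 0 ω‖ ^ 2) P)
    (g : EuclideanSpace ℝ (Fin d) → ℝ) (Lg : NNReal) (hg : LipschitzWith Lg g) :
    ∀ T : ℝ, 0 ≤ T →
      (∫ ω, |g (X T ω) - g (Y T ω)| ^ 2 ∂P) ≤
        (Lg : ℝ) ^ 2 * Real.exp (-(2 * m) * T) * ∫ ω, ‖X 0 ω - Y 0 ω‖ ^ 2 ∂P := by
  intro T hT
  have key : ∀ᵐ ω ∂P, |g (X T ω) - g (Y T ω)| ^ 2 ≤
      (Lg : ℝ) ^ 2 * (Real.exp (-(2 * m) * T) * ‖X 0 ω - Y 0 ω‖ ^ 2) := by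
    filter_upwards [hXY] with ω hω
    have hdiff : ∀ t : ℝ, 0 ≤ t → X t ω - Y t ω =
        (X 0 ω - Y 0 ω) + ∫ s in (0:ℝ)..t, (b (X s ω) - b (Y s ω)) := by
      intro t ht
      obtain ⟨hXe, hYe⟩ := hω t ht
      have hIX : IntervalIntegrable (fun s => b (X s ω)) volume 0 t :=
        (hb_cont.comp (hX_cont ω)).intervalIntegrable 0 t
      have hIY : IntervalIntegrable (fun s => b (Y s ω)) volume 0 t :=
        (hb_cont.comp (hY_cont ω)).intervalIntegrable 0 t
      rw [intervalIntegral.integral_sub hIX hIY, hXe, hYe]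
      abel
    have hcontr := det_contraction b hb_cont m hb (fun t => X t ω) (fun t => Y t ω)
      (hX_cont ω) (hY_cont ω) hdiff T hT
    have hlip : |g (X T ω) - g (Y T ω)| ≤ (Lg : ℝ) * ‖X T ω - Y T ω‖ := by
      have := hg.dist_le_mul (X T ω) (Y T ω)
      rwa [Real.dist_eq, dist_eq_norm] at this
    have h1 : |g (X T ω) - g (Y T ω)| ^ 2 ≤ ((Lg : ℝ) * ‖X T ω - Y T ω‖) ^ 2 :=
      pow_le_pow_left₀ (abs_nonneg _) hlip 2
    calc |g (X T ω) - g (Y T ω)| ^ 2 ≤ ((Lg : ℝ) * ‖X T ω - Y T ω‖) ^ 2 := h1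
      _ = (Lg : ℝ) ^ 2 * ‖X T ω - Y T ω‖ ^ 2 := by ring
      _ ≤ (Lg : ℝ) ^ 2 * (Real.exp (-(2 * m) * T) * ‖X 0 ω - Y 0 ω‖ ^ 2) := by
          exact mul_le_mul_of_nonneg_left hcontr (by positivity)
  have hInt : Integrable (fun ω =>
      (Lg : ℝ) ^ 2 * (Real.exp (-(2 * m) * T) * ‖X 0 ω - Y 0 ω‖ ^ 2)) P := by
    exact (h_int.const_mul ((Lg : ℝ) ^ 2 * Real.exp (-(2 * m) * T))).congr
      (Filter.Eventually.of_forall fun ω => by ring)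
  calc (∫ ω, |g (X T ω) - g (Y T ω)| ^ 2 ∂P)
      ≤ ∫ ω, (Lg : ℝ) ^ 2 * (Real.exp (-(2 * m) * T) * ‖X 0 ω - Y 0 ω‖ ^ 2) ∂P :=
        integral_mono_of_nonneg (Filter.Eventually.of_forall fun ω => by positivity) hInt key
    _ = (Lg : ℝ) ^ 2 * Real.exp (-(2 * m) * T) * ∫ ω, ‖X 0 ω - Y 0 ω‖ ^ 2 ∂P := by
        simp_rw [← mul_assoc]
        rw [integral_const_mul]
end

section
/- Let d ≥ 1, let b : ℝ^d → ℝ^d be L-Lipschitz (L > 0), let h > 0 and x ∈ ℝ^d. On a probability space let ξ₁, ξ₂ be ℝ^d-valued random vectors with E[ξ₁] = 0 and E‖ξ₁‖² = d. Define the coupled fine/coarse Euler steps x_{1/2} = x + (h/2) b(x) + √h ξ₁, x^f = x_{1/2} + (h/2) b(x_{1/2}) + √h ξ₂, and x^c = x + h b(x) + √h (ξ₁ + ξ₂). Then E‖x^f − x^c‖² ≤ h³ (L²/4) ( (h/2)(L²‖x‖² + ‖b(0)‖²) + d ). -/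
open MeasureTheory

set_option maxHeartbeats 1000000 in
/-- One-step strong (L²) error estimate for the coupled fine/coarse
Euler–Maruyama steps: two half-steps versus one full step driven by the
same noise. -/
theorem euler_coupling_one_step_strong_error
    {Ω : Type*} [MeasurableSpace Ω] (P : Measure Ω) [IsProbabilityMeasure P]
    {d : ℕ} (hd : 1 ≤ d)
    (b : EuclideanSpace ℝ (Fin d) → EuclideanSpace ℝ (Fin d))
    (L : ℝ) (hL : 0 < L)
    (hlip : ∀ x y : EuclideanSpace ℝ (Fin d), ‖b x - b y‖ ≤ L * ‖x - y‖)
    (h : ℝ) (hh : 0 < h) (x : EuclideanSpace ℝ (Fin d))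
    (ξ₁ ξ₂ : Ω → EuclideanSpace ℝ (Fin d))
    (hξ₁_meas : Measurable ξ₁) (hξ₂_meas : Measurable ξ₂)
    (hξ₁_int : Integrable ξ₁ P)
    (hξ₁_sq_int : Integrable (fun ω => ‖ξ₁ ω‖ ^ 2) P)
    (hξ₁_mean : (∫ ω, ξ₁ ω ∂P) = 0)
    (hξ₁_var : (∫ ω, ‖ξ₁ ω‖ ^ 2 ∂P) = d)
    (xhalf xf xc : Ω → EuclideanSpace ℝ (Fin d))
    (hxhalf : ∀ ω, xhalf ω = x + (h / 2) • b x + Real.sqrt h • ξ₁ ω)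
    (hxf : ∀ ω, xf ω = xhalf ω + (h / 2) • b (xhalf ω) + Real.sqrt h • ξ₂ ω)
    (hxc : ∀ ω, xc ω = x + h • b x + Real.sqrt h • (ξ₁ ω + ξ₂ ω)) :
    (∫ ω, ‖xf ω - xc ω‖ ^ 2 ∂P) ≤
      h ^ 3 * (L ^ 2 / 4) *
        ((h / 2) * (L ^ 2 * ‖x‖ ^ 2 + ‖b 0‖ ^ 2) + d) := by
  set v : EuclideanSpace ℝ (Fin d) := (h / 2) • b x with hv
  have hsq : Real.sqrt h ^ 2 = h := Real.sq_sqrt hh.le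
  -- the fine-coarse difference
  have hdiff : ∀ ω, xf ω - xc ω = (h / 2) • (b (xhalf ω) - b x) := by
    intro ω
    rw [hxf ω, hxc ω, hxhalf ω]
    module
  have hxhx : ∀ ω, xhalf ω - x = v + Real.sqrt h • ξ₁ ω := by
    intro ω; rw [hxhalf ω, hv]; abel
  -- dominating integrable function
  set G : Ω → ℝ := fun ω =>
    ‖v‖ ^ 2 + 2 * (Real.sqrt h * (inner ℝ v (ξ₁ ω) : ℝ)) + h * ‖ξ₁ ω‖ ^ 2 with hG
  have hGint : Integrable G P := by
    refine (integrable_const _).add (((hξ₁_int.const_inner v).const_mul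
      (Real.sqrt h)).const_mul 2) |>.add (hξ₁_sq_int.const_mul h)
  -- pointwise bound
  have hpt : ∀ ω, ‖xf ω - xc ω‖ ^ 2 ≤ (h ^ 2 * L ^ 2 / 4) * G ω := by
    intro ω
    have h2 : ‖v + Real.sqrt h • ξ₁ ω‖ ^ 2 = G ω := by
      have e1 : ‖v + Real.sqrt h • ξ₁ ω‖ ^ 2
          = ‖v‖ ^ 2 + 2 * (inner ℝ v (Real.sqrt h • ξ₁ ω) : ℝ)
            + ‖Real.sqrt h • ξ₁ ω‖ ^ 2 := norm_add_sq_real v _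
      have e2 : (inner ℝ v (Real.sqrt h • ξ₁ ω) : ℝ)
          = Real.sqrt h * (inner ℝ v (ξ₁ ω) : ℝ) := real_inner_smul_right v _ _
      have e3 : ‖Real.sqrt h • ξ₁ ω‖ ^ 2 = h * ‖ξ₁ ω‖ ^ 2 := by
        rw [norm_smul, Real.norm_eq_abs, abs_of_nonneg (Real.sqrt_nonneg h),
          mul_pow, hsq]
      rw [e1, e2, e3]
    have h6 : ‖b (xhalf ω) - b x‖ ≤ L * ‖v + Real.sqrt h • ξ₁ ω‖ := by
      rw [← hxhx ω]; exact hlip _ _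
    have h3 : ‖(h / 2 : ℝ)‖ = h / 2 := abs_of_nonneg (by positivity)
    rw [hdiff ω, norm_smul, h3, ← h2]
    have h4 : (0 : ℝ) ≤ ‖b (xhalf ω) - b x‖ := norm_nonneg _
    have h5 : (0 : ℝ) ≤ ‖v + Real.sqrt h • ξ₁ ω‖ := norm_nonneg _
    have h7 : ‖b (xhalf ω) - b x‖ ^ 2 ≤ (L * ‖v + Real.sqrt h • ξ₁ ω‖) ^ 2 := by
      have := mul_le_mul h6 h6 h4 (by positivity)
      nlinarith
    nlinarith [sq_nonneg h, hh.le]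
  -- integrate the bound
  have hmono : (∫ ω, ‖xf ω - xc ω‖ ^ 2 ∂P) ≤
      ∫ ω, (h ^ 2 * L ^ 2 / 4) * G ω ∂P := by
    refine integral_mono_of_nonneg (Filter.Eventually.of_forall fun ω => by positivity)
      (hGint.const_mul _) (Filter.Eventually.of_forall hpt)
  have i0 : Integrable (fun _ : Ω => ‖v‖ ^ 2) P := integrable_const _
  have i1 : Integrable (fun ω => 2 * (Real.sqrt h * (inner ℝ v (ξ₁ ω) : ℝ))) P :=
    ((hξ₁_int.const_inner v).const_mul (Real.sqrt h)).const_mul 2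
  have i2 : Integrable (fun ω => h * ‖ξ₁ ω‖ ^ 2) P := hξ₁_sq_int.const_mul h
  have i01 : Integrable (fun ω => ‖v‖ ^ 2
      + 2 * (Real.sqrt h * (inner ℝ v (ξ₁ ω) : ℝ))) P := i0.add i1
  have hGval : (∫ ω, G ω ∂P) = ‖v‖ ^ 2 + h * d := by
    simp only [hG]
    rw [integral_add i01 i2, integral_add i0 i1, integral_const,
      integral_const_mul, integral_const_mul, integral_const_mul,
      integral_inner hξ₁_int, hξ₁_mean, hξ₁_var]
    simp
  have hGint' : (∫ ω, (h ^ 2 * L ^ 2 / 4) * G ω ∂P) =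
      (h ^ 2 * L ^ 2 / 4) * (‖v‖ ^ 2 + h * d) := by
    rw [integral_const_mul, hGval]
  -- bound ‖b x‖
  have hbx : ‖b x‖ ^ 2 ≤ 2 * (L ^ 2 * ‖x‖ ^ 2 + ‖b 0‖ ^ 2) := by
    have h1 : ‖b x‖ ≤ L * ‖x‖ + ‖b 0‖ := by
      have ha := hlip x 0
      have hb := norm_sub_norm_le (b x) (b 0)
      simp only [sub_zero] at ha
      linarith
    nlinarith [norm_nonneg (b x), norm_nonneg x, norm_nonneg (b 0),
      sq_nonneg (L * ‖x‖ - ‖b 0‖)]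
  have hvnorm : ‖v‖ ^ 2 = (h / 2) ^ 2 * ‖b x‖ ^ 2 := by
    rw [hv, norm_smul, Real.norm_eq_abs, abs_of_nonneg (by positivity : (0:ℝ) ≤ h/2),
      mul_pow]
  calc (∫ ω, ‖xf ω - xc ω‖ ^ 2 ∂P) ≤ (h ^ 2 * L ^ 2 / 4) * (‖v‖ ^ 2 + h * d) := by
        rw [← hGint']; exact hmono
    _ ≤ h ^ 3 * (L ^ 2 / 4) * ((h / 2) * (L ^ 2 * ‖x‖ ^ 2 + ‖b 0‖ ^ 2) + d) := by
        rw [hvnorm]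
        have hcoef : (0:ℝ) ≤ h ^ 4 * L ^ 2 / 16 := by positivity
        nlinarith [mul_le_mul_of_nonneg_left hbx hcoef]
end

section
/- Let d ≥ 1, let b : ℝ^d → ℝ^d be L-Lipschitz (L > 0), let h > 0 and x ∈ ℝ^d. On a probability space let ξ₁, ξ₂ be integrable ℝ^d-valued random vectors with E[ξ₁] = 0 and E‖ξ₁‖² = d. Define the coupled fine/coarse Euler steps x_{1/2} = x + (h/2) b(x) + √h ξ₁, x^f = x_{1/2} + (h/2) b(x_{1/2}) + √h ξ₂, and x^c = x + h b(x) + √h (ξ₁ + ξ₂). Then ‖E[x^f − x^c]‖ ≤ (h^{3/2}/2) L ( (√h/2)(L‖x‖ + ‖b(0)‖) + √d ). -/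
open MeasureTheory

/-- One-step weak error estimate for the coupled fine/coarse Euler–Maruyama
steps: two half-steps versus one full step driven by the same noise. -/
theorem euler_coupling_one_step_weak_error
    {Ω : Type*} [MeasurableSpace Ω] (P : Measure Ω) [IsProbabilityMeasure P]
    {d : ℕ} (hd : 1 ≤ d)
    (b : EuclideanSpace ℝ (Fin d) → EuclideanSpace ℝ (Fin d))
    (L : ℝ) (hL : 0 < L)
    (hlip : ∀ x y : EuclideanSpace ℝ (Fin d), ‖b x - b y‖ ≤ L * ‖x - y‖)
    (h : ℝ) (hh : 0 < h) (x : EuclideanSpace ℝ (Fin d))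
    (ξ₁ ξ₂ : Ω → EuclideanSpace ℝ (Fin d))
    (hξ₁_meas : Measurable ξ₁) (hξ₂_meas : Measurable ξ₂)
    (hξ₁_int : Integrable ξ₁ P) (hξ₂_int : Integrable ξ₂ P)
    (hξ₁_sq_int : Integrable (fun ω => ‖ξ₁ ω‖ ^ 2) P)
    (hξ₁_mean : (∫ ω, ξ₁ ω ∂P) = 0)
    (hξ₁_var : (∫ ω, ‖ξ₁ ω‖ ^ 2 ∂P) = d)
    (xhalf xf xc : Ω → EuclideanSpace ℝ (Fin d))
    (hxhalf : ∀ ω, xhalf ω = x + (h / 2) • b x + Real.sqrt h • ξ₁ ω)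
    (hxf : ∀ ω, xf ω = xhalf ω + (h / 2) • b (xhalf ω) + Real.sqrt h • ξ₂ ω)
    (hxc : ∀ ω, xc ω = x + h • b x + Real.sqrt h • (ξ₁ ω + ξ₂ ω)) :
    ‖∫ ω, (xf ω - xc ω) ∂P‖ ≤
      (h ^ ((3:ℝ)/2) / 2) * L *
        ((Real.sqrt h / 2) * (L * ‖x‖ + ‖b 0‖) + Real.sqrt d) := by
  have hsh : (0:ℝ) ≤ Real.sqrt h := Real.sqrt_nonneg h
  -- key pointwise identity
  have key : ∀ ω, xf ω - xc ω = (h / 2) • (b (xhalf ω) - b x) := by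
    intro ω
    rw [hxf ω, hxc ω, hxhalf ω]
    module
  -- mean of ‖ξ₁‖ is at most √d
  set m := ∫ ω, ‖ξ₁ ω‖ ∂P with hm
  have hm0 : 0 ≤ m := integral_nonneg fun ω => norm_nonneg _
  have hnint : Integrable (fun ω => ‖ξ₁ ω‖) P := hξ₁_int.norm
  have hexp : (∫ ω, (‖ξ₁ ω‖ - m) ^ 2 ∂P) = (d : ℝ) - m ^ 2 := by
    have : ∀ ω, (‖ξ₁ ω‖ - m) ^ 2 = ‖ξ₁ ω‖ ^ 2 - (2 * m) * ‖ξ₁ ω‖ + m ^ 2 := by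
      intro ω; ring
    rw [integral_congr_ae (Filter.Eventually.of_forall this)]
    have hint1 : Integrable (fun ω => ‖ξ₁ ω‖ ^ 2 - (2 * m) * ‖ξ₁ ω‖) P :=
      hξ₁_sq_int.sub (hnint.const_mul (2 * m))
    rw [integral_add hint1 (integrable_const _),
      integral_sub hξ₁_sq_int (hnint.const_mul (2 * m)), integral_const_mul, hξ₁_var,
      integral_const]
    simp [← hm]
    ring
  have hmd : m ≤ Real.sqrt d := by
    have h0 : 0 ≤ (∫ ω, (‖ξ₁ ω‖ - m) ^ 2 ∂P) := integral_nonneg fun ω => sq_nonneg _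
    have : m ^ 2 ≤ (d : ℝ) := by nlinarith [hexp ▸ h0]
    exact (Real.le_sqrt hm0 (Nat.cast_nonneg d)).mpr this
  -- bound on ‖b x‖
  have hbx : ‖b x‖ ≤ L * ‖x‖ + ‖b 0‖ := by
    have := hlip x 0
    calc ‖b x‖ ≤ ‖b x - b 0‖ + ‖b 0‖ := by
          simpa using norm_add_le (b x - b 0) (b 0)
      _ ≤ L * ‖x‖ + ‖b 0‖ := by simpa using add_le_add_right this ‖b 0‖
  -- pointwise bound on ‖b (xhalf ω) - b x‖
  have hpt : ∀ ω, ‖b (xhalf ω) - b x‖ ≤ L * ((h / 2) * ‖b x‖ + Real.sqrt h * ‖ξ₁ ω‖) := by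
    intro ω
    have h1 : ‖xhalf ω - x‖ ≤ (h / 2) * ‖b x‖ + Real.sqrt h * ‖ξ₁ ω‖ := by
      rw [hxhalf ω]
      have : x + (h / 2) • b x + Real.sqrt h • ξ₁ ω - x = (h / 2) • b x + Real.sqrt h • ξ₁ ω := by
        abel
      rw [this]
      calc ‖(h / 2) • b x + Real.sqrt h • ξ₁ ω‖ ≤ ‖(h / 2) • b x‖ + ‖Real.sqrt h • ξ₁ ω‖ :=
            norm_add_le _ _
        _ ≤ (h / 2) * ‖b x‖ + Real.sqrt h * ‖ξ₁ ω‖ := by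
            rw [norm_smul, norm_smul]
            simp [abs_of_nonneg hh.le, abs_of_nonneg hsh]
    calc ‖b (xhalf ω) - b x‖ ≤ L * ‖xhalf ω - x‖ := hlip _ _
      _ ≤ L * ((h / 2) * ‖b x‖ + Real.sqrt h * ‖ξ₁ ω‖) := by
          exact mul_le_mul_of_nonneg_left h1 hL.le
  -- integral manipulations
  have hgint : Integrable (fun ω => L * ((h / 2) * ‖b x‖ + Real.sqrt h * ‖ξ₁ ω‖)) P := by
    apply Integrable.const_mul
    exact (integrable_const _).add (hnint.const_mul _)
  have hmain : ‖∫ ω, (xf ω - xc ω) ∂P‖ ≤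
      (h / 2) * (L * ((h / 2) * ‖b x‖ + Real.sqrt h * m)) := by
    calc ‖∫ ω, (xf ω - xc ω) ∂P‖ ≤ ∫ ω, ‖xf ω - xc ω‖ ∂P := norm_integral_le_integral_norm _
      _ = ∫ ω, (h / 2) * ‖b (xhalf ω) - b x‖ ∂P := by
          apply integral_congr_ae
          filter_upwards with ω
          rw [key ω, norm_smul]
          simp [abs_of_nonneg hh.le]
      _ ≤ ∫ ω, (h / 2) * (L * ((h / 2) * ‖b x‖ + Real.sqrt h * ‖ξ₁ ω‖)) ∂P := by
          apply integral_mono_of_nonneg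
          · filter_upwards with ω
            positivity
          · exact hgint.const_mul _
          · filter_upwards with ω
            exact mul_le_mul_of_nonneg_left (hpt ω) (by linarith)
      _ = (h / 2) * (L * ((h / 2) * ‖b x‖ + Real.sqrt h * m)) := by
          rw [integral_const_mul, integral_const_mul,
            integral_add (integrable_const _) (hnint.const_mul _), integral_const,
            integral_const_mul]
          simp [← hm]
  -- final arithmetic
  have hh32 : h ^ ((3:ℝ)/2) = h * Real.sqrt h := by
    rw [show (3:ℝ)/2 = 1 + 1/2 by norm_num, Real.rpow_add hh, Real.rpow_one,
      ← Real.sqrt_eq_rpow]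
  refine hmain.trans ?_
  have hss : Real.sqrt h * Real.sqrt h = h := Real.mul_self_sqrt hh.le
  have step : (h / 2) * (L * ((h / 2) * ‖b x‖ + Real.sqrt h * m)) ≤
      (h / 2) * (L * ((h / 2) * (L * ‖x‖ + ‖b 0‖) + Real.sqrt h * Real.sqrt d)) := by
    apply mul_le_mul_of_nonneg_left _ (by linarith : (0:ℝ) ≤ h / 2)
    apply mul_le_mul_of_nonneg_left _ hL.le
    have h1 : (h / 2) * ‖b x‖ ≤ (h / 2) * (L * ‖x‖ + ‖b 0‖) :=
      mul_le_mul_of_nonneg_left hbx (by linarith)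
    have h2 : Real.sqrt h * m ≤ Real.sqrt h * Real.sqrt d :=
      mul_le_mul_of_nonneg_left hmd hsh
    linarith
  refine step.trans (le_of_eq ?_)
  rw [hh32]
  linear_combination (-(L * h * (L * ‖x‖ + ‖b 0‖) / 4)) * hss
end

section
/- Let d ≥ 1 and let U : ℝ^d → ℝ be three times continuously differentiable with ∇U L-Lipschitz (L > 0) and with ‖D²U(z)‖ ≤ C and ‖D³U(z)‖ ≤ C for all z ∈ ℝ^d, for some C > 0. Then there exists a constant C' > 0, depending only on C and L, such that for every h ∈ (0,1], every x ∈ ℝ^d, and all ℝ^d-valued random vectors ξ₁, ξ₂ with E[ξ₁] = 0 and E‖ξ₁‖² = d, the coupled fine/coarse Euler steps x_{1/2} = x + (h/2)∇U(x) + √h ξ₁, x^f = x_{1/2} + (h/2)∇U(x_{1/2}) + √h ξ₂ and x^c = x + h∇U(x) + √h(ξ₁ + ξ₂) satisfy ‖E[x^f − x^c]‖ ≤ C' h² ( 1 + ‖x‖ + h‖x‖² + ‖∇U(0)‖ + h‖∇U(0)‖² + d ). -/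
set_option maxHeartbeats 1000000

open MeasureTheory InnerProductSpace Metric
open scoped Gradient

private lemma taylor_aux {E : Type*} [NormedAddCommGroup E] [NormedSpace ℝ E]
    {G : Type*} [NormedAddCommGroup G] [NormedSpace ℝ G]
    {F : E → G} (hF : ContDiff ℝ 2 F) {C : ℝ}
    (hDD : ∀ z, ‖fderiv ℝ (fderiv ℝ F) z‖ ≤ C) (x y : E) :
    ‖F y - F x - fderiv ℝ F x (y - x)‖ ≤ C * ‖y - x‖ ^ 2 := by
  have hC0 : 0 ≤ C := le_trans (ContinuousLinearMap.opNorm_nonneg _) (hDD x)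
  set D := fderiv ℝ F x with hD
  have hFdiff : Differentiable ℝ F := hF.differentiable (by norm_num)
  have hDFdiff : Differentiable ℝ (fderiv ℝ F) :=
    (hF.fderiv_right (m := 1) (by norm_num)).differentiable (by norm_num)
  have hlipDF : ∀ y z : E, ‖fderiv ℝ F y - fderiv ℝ F z‖ ≤ C * ‖y - z‖ := by
    intro y z
    exact Convex.norm_image_sub_le_of_norm_fderiv_le
      (fun w _ => hDFdiff w) (fun w _ => hDD w) convex_univ (Set.mem_univ z) (Set.mem_univ y)
  set φ : E → G := fun z => F z - D (z - x) with hφ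
  have hφderiv : ∀ w : E, HasFDerivAt φ (fderiv ℝ F w - D) w := by
    intro w
    have h1 : HasFDerivAt (fun z : E => D (z - x)) D w := by
      have he : (fun z : E => D (z - x)) = fun z => D z - D x := by ext z; simp
      rw [he]; exact D.hasFDerivAt.sub_const (D x)
    exact (hFdiff w).hasFDerivAt.sub h1
  have hmvt : ‖φ y - φ x‖ ≤ (C * ‖y - x‖) * ‖y - x‖ := by
    refine Convex.norm_image_sub_le_of_norm_fderiv_le
      (fun w _ => (hφderiv w).differentiableAt) ?_ (convex_closedBall x ‖y - x‖)
      (mem_closedBall_self (norm_nonneg _)) ?_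
    · intro w hw
      rw [(hφderiv w).fderiv]
      calc ‖fderiv ℝ F w - D‖ ≤ C * ‖w - x‖ := hlipDF w x
        _ ≤ C * ‖y - x‖ := by
            refine mul_le_mul_of_nonneg_left ?_ hC0
            rw [← dist_eq_norm]; exact mem_closedBall.mp hw
    · rw [mem_closedBall, dist_eq_norm]
  have heq : φ y - φ x = F y - F x - D (y - x) := by simp [hφ]; abel
  rw [heq] at hmvt
  calc ‖F y - F x - D (y - x)‖ ≤ (C * ‖y - x‖) * ‖y - x‖ := hmvt
    _ = C * ‖y - x‖ ^ 2 := by ring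


private lemma arith1 {C h G N s t : ℝ} (hC : 0 ≤ C) (hs2 : s ^ 2 = h)
    (ht0 : 0 ≤ t) (ht : t ≤ h / 2 * G + s * N) :
    C * t ^ 2 ≤ C * (h ^ 2 / 2 * G ^ 2 + 2 * h * N ^ 2) := by
  have h2 : t ^ 2 ≤ (h / 2 * G + s * N) ^ 2 := by nlinarith
  have h7 : (s * N) ^ 2 = h * N ^ 2 := by rw [mul_pow, hs2]
  nlinarith [sq_nonneg (h / 2 * G - s * N), mul_le_mul_of_nonneg_left h2 hC]

private lemma arith2 {C L h a b dd G : ℝ} (hC : 0 < C) (hL : 0 < L)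
    (hh : 0 < h) (hh1 : h ≤ 1) (ha : 0 ≤ a) (hb : 0 ≤ b) (hd0 : 0 ≤ dd)
    (hG0 : 0 ≤ G) (hG1 : G ≤ b + L * a) :
    h / 2 * (C * (h / 2) * G + C * (h ^ 2 / 2 * G ^ 2 + 2 * h * dd)) ≤
      (C * (1 + L) ^ 2 + 1) * h ^ 2 * (1 + a + h * a ^ 2 + b + h * b ^ 2 + dd) := by
  have hG2 : G ^ 2 ≤ 2 * b ^ 2 + 2 * L ^ 2 * a ^ 2 := by
    nlinarith [sq_nonneg (b - L * a), mul_nonneg hL.le ha]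
  set K : ℝ := C * (1 + L) ^ 2 + 1 with hK
  have hKpos : (0 : ℝ) < K := by positivity
  have k1 : C / 4 ≤ K := by nlinarith [mul_nonneg hC.le hL.le, mul_nonneg hC.le (mul_nonneg hL.le hL.le)]
  have k2 : C * L / 4 ≤ K := by nlinarith [mul_nonneg hC.le hL.le, mul_nonneg hC.le (mul_nonneg hL.le hL.le)]
  have k3 : C / 2 ≤ K := by nlinarith [mul_nonneg hC.le hL.le, mul_nonneg hC.le (mul_nonneg hL.le hL.le)]
  have k4 : C * L ^ 2 / 2 ≤ K := by nlinarith [mul_nonneg hC.le hL.le, mul_nonneg hC.le (mul_nonneg hL.le hL.le)]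
  have k5 : C ≤ K := by nlinarith [mul_nonneg hC.le hL.le, mul_nonneg hC.le (mul_nonneg hL.le hL.le)]
  calc h / 2 * (C * (h / 2) * G + C * (h ^ 2 / 2 * G ^ 2 + 2 * h * dd))
      = h ^ 2 * (C / 4 * G + C * h / 4 * G ^ 2 + C * dd) := by ring
    _ ≤ h ^ 2 * (C / 4 * (b + L * a) + C * h / 4 * (2 * b ^ 2 + 2 * L ^ 2 * a ^ 2) + C * dd) := by
        refine mul_le_mul_of_nonneg_left ?_ (sq_nonneg h)
        have t1 := mul_le_mul_of_nonneg_left hG1 (by positivity : (0:ℝ) ≤ C / 4)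
        have t2 := mul_le_mul_of_nonneg_left hG2 (by positivity : (0:ℝ) ≤ C * h / 4)
        linarith
    _ ≤ h ^ 2 * (K * (1 + a + h * a ^ 2 + b + h * b ^ 2 + dd)) := by
        refine mul_le_mul_of_nonneg_left ?_ (sq_nonneg h)
        nlinarith [mul_le_mul_of_nonneg_right k1 hb,
          mul_le_mul_of_nonneg_right k2 ha,
          mul_le_mul_of_nonneg_right k3 (mul_nonneg hh.le (sq_nonneg b)),
          mul_le_mul_of_nonneg_right k4 (mul_nonneg hh.le (sq_nonneg a)),
          mul_le_mul_of_nonneg_right k5 hd0, hKpos.le]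
    _ = K * h ^ 2 * (1 + a + h * a ^ 2 + b + h * b ^ 2 + dd) := by ring

/-- Improved (second-order) one-step weak error estimate for the coupled
fine/coarse Euler–Maruyama steps, under bounded second and third derivatives
of the potential `U`. -/
theorem euler_coupling_one_step_weak_error_improved
    {d : ℕ} (hd : 1 ≤ d)
    (U : EuclideanSpace ℝ (Fin d) → ℝ)
    (hU : ContDiff ℝ 3 U)
    (L : ℝ) (hL : 0 < L)
    (hlip : ∀ x y : EuclideanSpace ℝ (Fin d), ‖∇ U x - ∇ U y‖ ≤ L * ‖x - y‖)
    (C : ℝ) (hC : 0 < C)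
    (hD2 : ∀ z : EuclideanSpace ℝ (Fin d), ‖iteratedFDeriv ℝ 2 U z‖ ≤ C)
    (hD3 : ∀ z : EuclideanSpace ℝ (Fin d), ‖iteratedFDeriv ℝ 3 U z‖ ≤ C) :
    ∃ C' : ℝ, 0 < C' ∧
      ∀ (h : ℝ), 0 < h → h ≤ 1 → ∀ (x : EuclideanSpace ℝ (Fin d)),
      ∀ (Ω : Type) (mΩ : MeasurableSpace Ω) (P : Measure Ω)
        (_ : IsProbabilityMeasure P)
        (ξ₁ ξ₂ : Ω → EuclideanSpace ℝ (Fin d)),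
        Measurable ξ₁ → Measurable ξ₂ →
        Integrable ξ₁ P → Integrable (fun ω => ‖ξ₁ ω‖ ^ 2) P →
        (∫ ω, ξ₁ ω ∂P) = 0 → (∫ ω, ‖ξ₁ ω‖ ^ 2 ∂P) = d →
        ∀ (xhalf xf xc : Ω → EuclideanSpace ℝ (Fin d)),
        (∀ ω, xhalf ω = x + (h / 2) • ∇ U x + Real.sqrt h • ξ₁ ω) →
        (∀ ω, xf ω = xhalf ω + (h / 2) • ∇ U (xhalf ω) + Real.sqrt h • ξ₂ ω) →
        (∀ ω, xc ω = x + h • ∇ U x + Real.sqrt h • (ξ₁ ω + ξ₂ ω)) →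
        ‖∫ ω, (xf ω - xc ω) ∂P‖ ≤
          C' * h ^ 2 *
            (1 + ‖x‖ + h * ‖x‖ ^ 2 + ‖∇ U 0‖ + h * ‖∇ U 0‖ ^ 2 + d) := by
  classical
  refine ⟨C * (1 + L) ^ 2 + 1, by positivity, ?_⟩
  intro h hh hh1 x Ω mΩ P hP ξ₁ ξ₂ hm1 hm2 hint1 hint2 hmean hvar xhalf xf xc hxh hxf hxc
  set F : EuclideanSpace ℝ (Fin d) → (EuclideanSpace ℝ (Fin d) →L[ℝ] ℝ) := fderiv ℝ U with hF
  have hF2 : ContDiff ℝ 2 F := hU.fderiv_right (by norm_num)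
  have hDF : ∀ z : EuclideanSpace ℝ (Fin d), ‖fderiv ℝ F z‖ ≤ C := by
    intro z
    calc ‖fderiv ℝ F z‖ = ‖iteratedFDeriv ℝ 0 (fderiv ℝ F) z‖ :=
          (norm_iteratedFDeriv_zero (f := fderiv ℝ F)).symm
      _ = ‖iteratedFDeriv ℝ 1 F z‖ := norm_iteratedFDeriv_fderiv
      _ = ‖iteratedFDeriv ℝ 2 U z‖ := norm_iteratedFDeriv_fderiv
      _ ≤ C := hD2 z
  letI : NormedAddCommGroup (EuclideanSpace ℝ (Fin d) →L[ℝ] EuclideanSpace ℝ (Fin d) →L[ℝ] EuclideanSpace ℝ (Fin d) →L[ℝ] ℝ) :=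
    ContinuousLinearMap.toNormedAddCommGroup (𝕜 := ℝ) (𝕜₂ := ℝ) (E := EuclideanSpace ℝ (Fin d)) (F := EuclideanSpace ℝ (Fin d) →L[ℝ] EuclideanSpace ℝ (Fin d) →L[ℝ] ℝ) (σ₁₂ := RingHom.id ℝ)
  letI : NormedSpace ℝ (EuclideanSpace ℝ (Fin d) →L[ℝ] EuclideanSpace ℝ (Fin d) →L[ℝ] EuclideanSpace ℝ (Fin d) →L[ℝ] ℝ) :=
    ContinuousLinearMap.toNormedSpace (𝕜 := ℝ) (𝕜₂ := ℝ) (E := EuclideanSpace ℝ (Fin d)) (F := EuclideanSpace ℝ (Fin d) →L[ℝ] EuclideanSpace ℝ (Fin d) →L[ℝ] ℝ) (σ₁₂ := RingHom.id ℝ)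
  have hDDF : ∀ z : EuclideanSpace ℝ (Fin d), ‖fderiv ℝ (fderiv ℝ F) z‖ ≤ C := by
    intro z
    calc ‖fderiv ℝ (fderiv ℝ F) z‖ = ‖iteratedFDeriv ℝ 0 (fderiv ℝ (fderiv ℝ F)) z‖ :=
          (norm_iteratedFDeriv_zero).symm
      _ = ‖iteratedFDeriv ℝ 1 (fderiv ℝ F) z‖ := norm_iteratedFDeriv_fderiv (n := 0) (f := fderiv ℝ F) (x := z)
      _ = ‖iteratedFDeriv ℝ 2 F z‖ := norm_iteratedFDeriv_fderiv
      _ = ‖iteratedFDeriv ℝ 3 U z‖ := norm_iteratedFDeriv_fderiv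
      _ ≤ C := hD3 z
  have hTay := taylor_aux hF2 hDDF x
  set D : EuclideanSpace ℝ (Fin d) →L[ℝ] (EuclideanSpace ℝ (Fin d) →L[ℝ] ℝ) := fderiv ℝ F x with hDdef
  set e := (toDual ℝ (EuclideanSpace ℝ (Fin d))).symm with he
  set A : EuclideanSpace ℝ (Fin d) →L[ℝ] EuclideanSpace ℝ (Fin d) := (e.toContinuousLinearEquiv.toContinuousLinearMap).comp D with hA
  have hAapp : ∀ v : EuclideanSpace ℝ (Fin d), A v = e (D v) := fun v => rfl
  have hAle : ∀ v : EuclideanSpace ℝ (Fin d), ‖A v‖ ≤ C * ‖v‖ := by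
    intro v
    rw [hAapp, e.norm_map]
    exact (D.le_opNorm v).trans (mul_le_mul_of_nonneg_right (hDF x) (norm_nonneg v))
  -- second-order Taylor bound for the gradient
  have hgTay : ∀ y : EuclideanSpace ℝ (Fin d), ‖∇ U y - ∇ U x - A (y - x)‖ ≤ C * ‖y - x‖ ^ 2 := by
    intro y
    show ‖e (F y) - e (F x) - e (D (y - x))‖ ≤ _
    rw [← map_sub, ← map_sub, e.norm_map]
    exact hTay y
  -- measurability / integrability
  have hxh' : xhalf = fun ω => x + (h / 2) • ∇ U x + Real.sqrt h • ξ₁ ω := funext hxh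
  have hms : Measurable xhalf := by
    rw [hxh']; exact (hm1.const_smul (Real.sqrt h)).const_add _
  have hgcont : Continuous fun z : EuclideanSpace ℝ (Fin d) => ∇ U z := by
    show Continuous fun z : EuclideanSpace ℝ (Fin d) => e (fderiv ℝ U z)
    exact e.continuous.comp hF2.continuous
  have hdev : ∀ ω, xhalf ω - x = (h / 2) • ∇ U x + Real.sqrt h • ξ₁ ω := by
    intro ω; rw [hxh ω]; abel
  have hdint : Integrable (fun ω => xhalf ω - x) P := by
    have : (fun ω => xhalf ω - x) = fun ω => (h / 2) • ∇ U x + Real.sqrt h • ξ₁ ω :=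
      funext hdev
    rw [this]
    exact (integrable_const _).add (hint1.smul (Real.sqrt h))
  have hs1 : Integrable (fun ω => Real.sqrt h • ξ₁ ω) P := hint1.smul (Real.sqrt h)
  have hdmean : ∫ ω, (xhalf ω - x) ∂P = (h / 2) • ∇ U x := by
    simp_rw [hdev]
    rw [integral_add (integrable_const _) hs1, integral_const,
      integral_smul, hmean, smul_zero, add_zero, probReal_univ, one_smul]
  have hnormdev : ∀ ω, ‖xhalf ω - x‖ ≤ h / 2 * ‖∇ U x‖ + Real.sqrt h * ‖ξ₁ ω‖ := by
    intro ω
    rw [hdev ω]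
    refine (norm_add_le _ _).trans ?_
    rw [norm_smul, norm_smul, Real.norm_eq_abs, Real.norm_eq_abs,
      abs_of_nonneg (by positivity), abs_of_nonneg (Real.sqrt_nonneg h)]
  have hGint : Integrable (fun ω => ∇ U (xhalf ω) - ∇ U x) P := by
    refine Integrable.mono (hdint.norm.const_mul L) ?_ ?_
    · exact ((hgcont.measurable.comp hms).sub measurable_const).aestronglyMeasurable
    · filter_upwards with ω
      rw [Real.norm_eq_abs, abs_of_nonneg (by positivity)]
      exact hlip _ _
  have hAint : Integrable (fun ω => A (xhalf ω - x)) P := A.integrable_comp hdint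
  have hRint : Integrable (fun ω => ∇ U (xhalf ω) - ∇ U x - A (xhalf ω - x)) P :=
    hGint.sub hAint
  have hsplit : ∫ ω, (∇ U (xhalf ω) - ∇ U x) ∂P =
      A ((h / 2) • ∇ U x) + ∫ ω, (∇ U (xhalf ω) - ∇ U x - A (xhalf ω - x)) ∂P := by
    have hfe : (fun ω => ∇ U (xhalf ω) - ∇ U x) =
        fun ω => A (xhalf ω - x) + (∇ U (xhalf ω) - ∇ U x - A (xhalf ω - x)) := by
      funext ω; abel
    rw [hfe, integral_add hAint hRint, A.integral_comp_comm hdint, hdmean]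
  -- bound the remainder integral
  have hRb : ∀ ω, ‖∇ U (xhalf ω) - ∇ U x - A (xhalf ω - x)‖ ≤
      C * (h ^ 2 / 2 * ‖∇ U x‖ ^ 2 + 2 * h * ‖ξ₁ ω‖ ^ 2) := by
    intro ω
    refine (hgTay (xhalf ω)).trans ?_
    have h1 := hnormdev ω
    exact arith1 hC.le (Real.sq_sqrt hh.le) (norm_nonneg _) h1
  have hBint : Integrable (fun ω => C * (h ^ 2 / 2 * ‖∇ U x‖ ^ 2 + 2 * h * ‖ξ₁ ω‖ ^ 2)) P :=
    (((integrable_const _).add (hint2.const_mul (2 * h))).const_mul C)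
  have hRbound : ‖∫ ω, (∇ U (xhalf ω) - ∇ U x - A (xhalf ω - x)) ∂P‖ ≤
      C * (h ^ 2 / 2 * ‖∇ U x‖ ^ 2 + 2 * h * (d : ℝ)) := by
    refine (norm_integral_le_integral_norm _).trans ?_
    have := integral_mono hRint.norm hBint hRb
    refine this.trans_eq ?_
    rw [integral_const_mul, integral_add (integrable_const _) (hint2.const_mul (2 * h)),
      integral_const, probReal_univ, smul_eq_mul, one_mul,
      integral_const_mul, hvar]
  -- pointwise identity and main computation
  have hpt : ∀ ω, xf ω - xc ω = (h / 2) • (∇ U (xhalf ω) - ∇ U x) := by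
    intro ω
    rw [hxf ω, hxc ω, hxh ω]
    module
  have hkey : ∫ ω, (xf ω - xc ω) ∂P =
      (h / 2) • (A ((h / 2) • ∇ U x) +
        ∫ ω, (∇ U (xhalf ω) - ∇ U x - A (xhalf ω - x)) ∂P) := by
    simp_rw [hpt]
    rw [integral_smul, hsplit]
  -- norm bounds
  have hAterm : ‖A ((h / 2) • ∇ U x)‖ ≤ C * (h / 2) * ‖∇ U x‖ := by
    refine (hAle _).trans_eq ?_
    rw [norm_smul, Real.norm_eq_abs, abs_of_nonneg (by positivity)]
    ring
  have hmain : ‖∫ ω, (xf ω - xc ω) ∂P‖ ≤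
      h / 2 * (C * (h / 2) * ‖∇ U x‖ + C * (h ^ 2 / 2 * ‖∇ U x‖ ^ 2 + 2 * h * (d : ℝ))) := by
    rw [hkey, norm_smul, Real.norm_eq_abs, abs_of_nonneg (by positivity)]
    refine mul_le_mul_of_nonneg_left ?_ (by positivity)
    exact (norm_add_le _ _).trans (add_le_add hAterm hRbound)
  refine hmain.trans ?_
  have hG1 : ‖∇ U x‖ ≤ ‖∇ U 0‖ + L * ‖x‖ := by
    have hl0 := hlip x 0
    rw [sub_zero] at hl0
    calc ‖∇ U x‖ = ‖(∇ U x - ∇ U 0) + ∇ U 0‖ := by rw [sub_add_cancel]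
      _ ≤ ‖∇ U x - ∇ U 0‖ + ‖∇ U 0‖ := norm_add_le _ _
      _ ≤ ‖∇ U 0‖ + L * ‖x‖ := by linarith
  have hd1 : (1 : ℝ) ≤ (d : ℝ) := by exact_mod_cast hd
  exact arith2 hC hL hh hh1 (norm_nonneg x) (norm_nonneg _) (by linarith)
    (norm_nonneg _) hG1
end

section
/- Let d ≥ 1 and let b : ℝ^d → ℝ^d satisfy ⟨b(x) − b(y), x − y⟩ ≤ −m‖x − y‖² for all x, y ∈ ℝ^d, with m > 0. Let h > 0 and suppose X, Y, x, y, η ∈ ℝ^d satisfy the implicit relations X = x + h b(X) + η and Y = y + h b(Y) + η. Then ‖X − Y‖² ≤ ‖x − y‖² / (1 + 2mh). -/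
open scoped RealInnerProductSpace

/-- L²-regularity (one-step contraction) of the implicit (backward) Euler
scheme under the one-sided Lipschitz condition; the common noise increment
cancels and the contraction is deterministic. -/
theorem implicit_euler_one_step_contraction
    {d : ℕ} (hd : 1 ≤ d)
    (b : EuclideanSpace ℝ (Fin d) → EuclideanSpace ℝ (Fin d))
    (m : ℝ) (hm : 0 < m)
    (hmono : ∀ x y : EuclideanSpace ℝ (Fin d), ⟪b x - b y, x - y⟫ ≤ -m * ‖x - y‖ ^ 2)
    (h : ℝ) (hh : 0 < h)
    (X Y x y η : EuclideanSpace ℝ (Fin d))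
    (hX : X = x + h • b X + η)
    (hY : Y = y + h • b Y + η) :
    ‖X - Y‖ ^ 2 ≤ ‖x - y‖ ^ 2 / (1 + 2 * m * h) := by
  have hsub : X - Y = (x + h • b X + η) - (y + h • b Y + η) := by
    conv_lhs => rw [hX, hY]
  have key : x - y = (X - Y) - h • (b X - b Y) := by
    rw [hsub]; module
  have hmono' := hmono X Y
  have hnorm : ‖x - y‖ ^ 2
      = ‖X - Y‖ ^ 2 - 2 * ⟪X - Y, h • (b X - b Y)⟫ + ‖h • (b X - b Y)‖ ^ 2 := by
    rw [key]
    rw [norm_sub_sq_real]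
  have hinner : ⟪X - Y, h • (b X - b Y)⟫ = h * ⟪b X - b Y, X - Y⟫ := by
    rw [real_inner_smul_right, real_inner_comm]
  have hpos : (0 : ℝ) < 1 + 2 * m * h := by positivity
  rw [le_div_iff₀ hpos]
  have h1 : 0 ≤ ‖h • (b X - b Y)‖ ^ 2 := by positivity
  nlinarith [hmono', hnorm, hinner, mul_le_mul_of_nonneg_left hmono' hh.le]
end

section
/- Let d ≥ 1 and let b : ℝ^d → ℝ^d satisfy ⟨b(z), z⟩ ≤ −(m/2)‖z‖² + c₀ for all z ∈ ℝ^d, with m > 0 and c₀ ≥ 0. Let h > 0, x ∈ ℝ^d, let ξ be a square-integrable ℝ^d-valued random vector with E[ξ] = 0 and E‖ξ‖² = d, and let X be a square-integrable ℝ^d-valued random vector satisfying X = x + h b(X) + √(2h) ξ almost surely. Then E‖X‖² ≤ (‖x‖² + 2hd + 2hc₀)/(1 + mh). -/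
open MeasureTheory
open scoped RealInnerProductSpace

/-- One-step second-moment bound for the implicit (backward) Euler scheme
under a dissipativity condition on the drift. -/
theorem implicit_euler_one_step_moment_bound
    {Ω : Type*} [MeasurableSpace Ω] (P : Measure Ω) [IsProbabilityMeasure P]
    {d : ℕ} (hd : 1 ≤ d)
    (b : EuclideanSpace ℝ (Fin d) → EuclideanSpace ℝ (Fin d))
    (m c₀ : ℝ) (hm : 0 < m) (hc₀ : 0 ≤ c₀)
    (hdiss : ∀ z : EuclideanSpace ℝ (Fin d), ⟪b z, z⟫ ≤ -(m / 2) * ‖z‖ ^ 2 + c₀)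
    (h : ℝ) (hh : 0 < h)
    (x : EuclideanSpace ℝ (Fin d))
    (ξ : Ω → EuclideanSpace ℝ (Fin d))
    (hξ_meas : Measurable ξ)
    (hξ_int : Integrable ξ P)
    (hξ_sq_int : Integrable (fun ω => ‖ξ ω‖ ^ 2) P)
    (hξ_mean : (∫ ω, ξ ω ∂P) = 0)
    (hξ_var : (∫ ω, ‖ξ ω‖ ^ 2 ∂P) = d)
    (X : Ω → EuclideanSpace ℝ (Fin d))
    (hX_meas : Measurable X)
    (hX_sq_int : Integrable (fun ω => ‖X ω‖ ^ 2) P)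
    (hX : ∀ᵐ ω ∂P, X ω = x + h • b (X ω) + Real.sqrt (2 * h) • ξ ω) :
    (∫ ω, ‖X ω‖ ^ 2 ∂P) ≤
      (‖x‖ ^ 2 + 2 * h * d + 2 * h * c₀) / (1 + m * h) := by
  set s : ℝ := Real.sqrt (2 * h) with hs
  have hs2 : s ^ 2 = 2 * h := Real.sq_sqrt (by linarith)
  set g : Ω → ℝ := fun ω => ‖x + s • ξ ω‖ ^ 2 with hg
  -- expansion of g
  have hg_eq : ∀ ω, g ω = ‖x‖ ^ 2 + 2 * s * ⟪x, ξ ω⟫ + 2 * h * ‖ξ ω‖ ^ 2 := by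
    intro ω
    have := @norm_add_sq_real (EuclideanSpace ℝ (Fin d)) _ _ x (s • ξ ω)
    rw [hg]
    simp only [this, real_inner_smul_right, norm_smul, Real.norm_eq_abs]
    rw [mul_pow, sq_abs, hs2]
    ring
  have hinner_int : Integrable (fun ω => ⟪x, ξ ω⟫) P := hξ_int.const_inner x
  have hg_int : Integrable g P := by
    have : Integrable (fun ω => ‖x‖ ^ 2 + 2 * s * ⟪x, ξ ω⟫ + 2 * h * ‖ξ ω‖ ^ 2) P :=
      ((integrable_const _).add (hinner_int.const_mul _)).add (hξ_sq_int.const_mul _)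
    exact this.congr (Filter.Eventually.of_forall fun ω => (hg_eq ω).symm)
  have hg_integral : (∫ ω, g ω ∂P) = ‖x‖ ^ 2 + 2 * h * d := by
    calc (∫ ω, g ω ∂P)
        = ∫ ω, ‖x‖ ^ 2 + 2 * s * ⟪x, ξ ω⟫ + 2 * h * ‖ξ ω‖ ^ 2 ∂P := by
          exact integral_congr_ae (Filter.Eventually.of_forall hg_eq)
      _ = (∫ _ω, ‖x‖ ^ 2 ∂P) + (∫ ω, 2 * s * ⟪x, ξ ω⟫ ∂P)
          + (∫ ω, 2 * h * ‖ξ ω‖ ^ 2 ∂P) := by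
          have e1 : (∫ ω, (‖x‖ ^ 2 + 2 * s * ⟪x, ξ ω⟫) + 2 * h * ‖ξ ω‖ ^ 2 ∂P)
              = (∫ ω, ‖x‖ ^ 2 + 2 * s * ⟪x, ξ ω⟫ ∂P) + ∫ ω, 2 * h * ‖ξ ω‖ ^ 2 ∂P :=
            integral_add ((integrable_const _).add (hinner_int.const_mul _))
              (hξ_sq_int.const_mul _)
          have e2 : (∫ ω, ‖x‖ ^ 2 + 2 * s * ⟪x, ξ ω⟫ ∂P)
              = (∫ _ω, ‖x‖ ^ 2 ∂P) + ∫ ω, 2 * s * ⟪x, ξ ω⟫ ∂P :=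
            integral_add (integrable_const _) (hinner_int.const_mul _)
          rw [e1, e2]
      _ = ‖x‖ ^ 2 + 2 * h * d := by
          rw [integral_const, integral_const_mul, integral_const_mul,
            integral_inner hξ_int x, hξ_mean, hξ_var]
          simp
  have hpos : (0:ℝ) < 1 + m * h := by positivity
  -- pointwise bound
  have key : ∀ᵐ ω ∂P, (1 + m * h) * ‖X ω‖ ^ 2 ≤ g ω + 2 * h * c₀ := by
    filter_upwards [hX] with ω hω
    set v : EuclideanSpace ℝ (Fin d) := x + s • ξ ω with hv
    have heq : X ω = v + h • b (X ω) := by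
      conv_lhs => rw [hω]
      rw [hv]; abel
    have h1 : ‖X ω‖ ^ 2 = ⟪v, X ω⟫ + h * ⟪b (X ω), X ω⟫ := by
      conv_lhs => rw [← real_inner_self_eq_norm_sq]
      nth_rewrite 1 [heq]
      rw [inner_add_left, real_inner_smul_left]
    have h2 : ⟪v, X ω⟫ ≤ (‖v‖ ^ 2 + ‖X ω‖ ^ 2) / 2 := by
      have h3 := real_inner_le_norm v (X ω)
      nlinarith [sq_nonneg (‖v‖ - ‖X ω‖)]
    have h4 : h * ⟪b (X ω), X ω⟫ ≤ h * (-(m / 2) * ‖X ω‖ ^ 2 + c₀) :=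
      mul_le_mul_of_nonneg_left (hdiss (X ω)) hh.le
    have hgv : g ω = ‖v‖ ^ 2 := rfl
    nlinarith
  have hmain : (1 + m * h) * (∫ ω, ‖X ω‖ ^ 2 ∂P) ≤ ‖x‖ ^ 2 + 2 * h * d + 2 * h * c₀ := by
    calc (1 + m * h) * (∫ ω, ‖X ω‖ ^ 2 ∂P)
        = ∫ ω, (1 + m * h) * ‖X ω‖ ^ 2 ∂P := (integral_const_mul _ _).symm
      _ ≤ ∫ ω, g ω + 2 * h * c₀ ∂P :=
          integral_mono_ae (hX_sq_int.const_mul _) (hg_int.add (integrable_const _)) key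
      _ = (∫ ω, g ω ∂P) + 2 * h * c₀ := by
          rw [integral_add hg_int (integrable_const _), integral_const]; simp
      _ = ‖x‖ ^ 2 + 2 * h * d + 2 * h * c₀ := by rw [hg_integral]
  rw [le_div_iff₀ hpos]
  linarith
end

section
/- Let d ≥ 1, N ≥ 1, s ≥ 1. Let c₀ : ℝ^d → ℝ^d be L₀-Lipschitz and satisfy ⟨c₀(x) − c₀(y), x − y⟩ ≤ −m₀‖x − y‖² for all x, y, and for each i ∈ {1,…,N} let c_i : ℝ^d → ℝ^d be L-Lipschitz and satisfy ⟨c_i(x) − c_i(y), x − y⟩ ≤ −m̲‖x − y‖² for all x, y, where m₀, m̲ ≥ 0 and m := m₀ + N m̲ > 0. For a subsample vector τ ∈ {1,…,N}^s define b(x, τ) := c₀(x) + (N/s) Σ_{j=1}^s c_{τ_j}(x). Then for every h > 0, every τ ∈ {1,…,N}^s and all x, y ∈ ℝ^d, ‖(x + h b(x,τ)) − (y + h b(y,τ))‖² ≤ (1 − (2m − (L₀ + NL)²h)h) ‖x − y‖². -/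
open scoped RealInnerProductSpace

/-- L²-regularity (one-step contraction) of the SGLD drift map: for any fixed
subsample `τ`, the subsampled drift is `(L₀ + N·L)`-Lipschitz and `m`-strongly
monotone, so the Euler step with subsampled drift contracts. -/
theorem sgld_one_step_contraction
    {d : ℕ} (hd : 1 ≤ d) (N s : ℕ) (hN : 1 ≤ N) (hs : 1 ≤ s)
    (c₀ : EuclideanSpace ℝ (Fin d) → EuclideanSpace ℝ (Fin d))
    (c : Fin N → EuclideanSpace ℝ (Fin d) → EuclideanSpace ℝ (Fin d))
    (L₀ L m₀ mlow : ℝ)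
    (hm₀ : 0 ≤ m₀) (hmlow : 0 ≤ mlow)
    (hm : 0 < m₀ + N * mlow)
    (hc₀_lip : ∀ x y : EuclideanSpace ℝ (Fin d), ‖c₀ x - c₀ y‖ ≤ L₀ * ‖x - y‖)
    (hc₀_mono : ∀ x y : EuclideanSpace ℝ (Fin d),
      ⟪c₀ x - c₀ y, x - y⟫ ≤ -m₀ * ‖x - y‖ ^ 2)
    (hc_lip : ∀ i : Fin N, ∀ x y : EuclideanSpace ℝ (Fin d),
      ‖c i x - c i y‖ ≤ L * ‖x - y‖)
    (hc_mono : ∀ i : Fin N, ∀ x y : EuclideanSpace ℝ (Fin d),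
      ⟪c i x - c i y, x - y⟫ ≤ -mlow * ‖x - y‖ ^ 2) :
    ∀ (h : ℝ), 0 < h → ∀ (τ : Fin s → Fin N) (x y : EuclideanSpace ℝ (Fin d)),
      ‖(x + h • (c₀ x + ((N : ℝ) / s) • ∑ j : Fin s, c (τ j) x)) -
        (y + h • (c₀ y + ((N : ℝ) / s) • ∑ j : Fin s, c (τ j) y))‖ ^ 2 ≤
        (1 - (2 * (m₀ + N * mlow) - (L₀ + N * L) ^ 2 * h) * h) * ‖x - y‖ ^ 2 := by
  intro h hh τ x y
  -- nonnegativity of Lipschitz constants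
  have hdpos : 0 < d := hd
  have hNs : (0:ℝ) < (N:ℝ) / s := by
    have hN' : (0:ℝ) < N := by exact_mod_cast hN
    have hs' : (0:ℝ) < s := by exact_mod_cast hs
    positivity
  set e : EuclideanSpace ℝ (Fin d) := EuclideanSpace.single ⟨0, hdpos⟩ (1:ℝ) with he
  have hne : ‖e - 0‖ = 1 := by
    simp [he, EuclideanSpace.norm_single]
  have hL₀ : 0 ≤ L₀ := by
    have := hc₀_lip e 0
    rw [hne, mul_one] at this
    exact le_trans (norm_nonneg _) this
  have hL : 0 ≤ L := by
    have := hc_lip ⟨0, hN⟩ e 0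
    rw [hne, mul_one] at this
    exact le_trans (norm_nonneg _) this
  set u := x - y with hu
  set Δ := (c₀ x - c₀ y) + ((N : ℝ) / s) • ∑ j : Fin s, (c (τ j) x - c (τ j) y)
    with hΔ
  have key : (x + h • (c₀ x + ((N : ℝ) / s) • ∑ j : Fin s, c (τ j) x)) -
        (y + h • (c₀ y + ((N : ℝ) / s) • ∑ j : Fin s, c (τ j) y)) = u + h • Δ := by
    simp only [hΔ, hu, Finset.sum_sub_distrib, smul_sub, smul_add]
    abel
  rw [key]
  -- monotonicity bound
  have hmono : ⟪Δ, u⟫ ≤ -(m₀ + N * mlow) * ‖u‖ ^ 2 := by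
    have h1 : ⟪((N : ℝ) / s) • ∑ j : Fin s, (c (τ j) x - c (τ j) y), u⟫
        = ((N : ℝ) / s) * ∑ j : Fin s, ⟪c (τ j) x - c (τ j) y, u⟫ := by
      rw [real_inner_smul_left, sum_inner]
    have h2 : ∑ j : Fin s, ⟪c (τ j) x - c (τ j) y, u⟫ ≤ ∑ _j : Fin s, (-mlow * ‖u‖ ^ 2) :=
      Finset.sum_le_sum fun j _ => hc_mono (τ j) x y
    have h3 : (∑ _j : Fin s, (-mlow * ‖u‖ ^ 2)) = s * (-mlow * ‖u‖ ^ 2) := by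
      simp [Finset.sum_const, mul_comm]
    have hs' : (0:ℝ) < s := by exact_mod_cast hs
    have h4 : ((N : ℝ) / s) * (s * (-mlow * ‖u‖ ^ 2)) = -(N * mlow) * ‖u‖ ^ 2 := by
      field_simp
    have h5 := hc₀_mono x y
    rw [hΔ, inner_add_left, h1]
    have h6 : ((N : ℝ) / s) * ∑ j : Fin s, ⟪c (τ j) x - c (τ j) y, u⟫
        ≤ -(N * mlow) * ‖u‖ ^ 2 := by
      calc ((N : ℝ) / s) * ∑ j : Fin s, ⟪c (τ j) x - c (τ j) y, u⟫
          ≤ ((N : ℝ) / s) * (s * (-mlow * ‖u‖ ^ 2)) := by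
            rw [← h3]; exact mul_le_mul_of_nonneg_left h2 (le_of_lt hNs)
        _ = -(N * mlow) * ‖u‖ ^ 2 := h4
    nlinarith [h5]
  -- Lipschitz bound
  have hlip : ‖Δ‖ ≤ (L₀ + N * L) * ‖u‖ := by
    have hs' : (0:ℝ) < s := by exact_mod_cast hs
    calc ‖Δ‖ ≤ ‖c₀ x - c₀ y‖ + ‖((N : ℝ) / s) • ∑ j : Fin s, (c (τ j) x - c (τ j) y)‖ :=
          norm_add_le _ _
      _ ≤ L₀ * ‖u‖ + ((N : ℝ) / s) * ∑ j : Fin s, ‖c (τ j) x - c (τ j) y‖ := by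
          gcongr
          · exact hc₀_lip x y
          · rw [norm_smul, Real.norm_eq_abs, abs_of_pos hNs]
            exact mul_le_mul_of_nonneg_left (norm_sum_le _ _) (le_of_lt hNs)
      _ ≤ L₀ * ‖u‖ + ((N : ℝ) / s) * ∑ _j : Fin s, (L * ‖u‖) := by
          gcongr with j
          · exact hc_lip (τ j) x y
      _ = (L₀ + N * L) * ‖u‖ := by
          simp only [Finset.sum_const, Finset.card_univ, Fintype.card_fin, nsmul_eq_mul]
          field_simp
  have hΔsq : ‖Δ‖ ^ 2 ≤ ((L₀ + N * L) * ‖u‖) ^ 2 :=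
    pow_le_pow_left₀ (norm_nonneg _) hlip 2
  have hexp : ‖u + h • Δ‖ ^ 2 = ‖u‖ ^ 2 + 2 * (h * ⟪u, Δ⟫) + h ^ 2 * ‖Δ‖ ^ 2 := by
    rw [norm_add_sq_real, real_inner_smul_right, norm_smul, Real.norm_eq_abs,
      abs_of_pos hh, mul_pow]
  rw [hexp]
  have hsym : ⟪u, Δ⟫ = ⟪Δ, u⟫ := real_inner_comm _ _
  nlinarith [hmono, hΔsq, sq_nonneg ‖u‖, hh.le, mul_pos hh hh]
end

section
/- Let d ≥ 1, N ≥ 1, s ≥ 1, let v₁, …, v_N ∈ ℝ^d, let τ₁, …, τ_{2s} be i.i.d. random variables uniformly distributed on {1, …, N}, and let S be a uniformly distributed random s-element subset of {1, …, 2s}, independent of (τ₁, …, τ_{2s}). Set T₁ = Σ_{j=1}^s v_{τ_j}, T₂ = Σ_{j=s+1}^{2s} v_{τ_j}, and T₃ = 2 Σ_{k∈S} v_{τ_k}. Then E‖T₁ + T₂ − T₃‖² = (2s/N) Σ_{i=1}^N ‖v_i‖² − (2s/N²) ‖Σ_{i=1}^N v_i‖². -/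
open MeasureTheory

section Aux

variable {Ω' α : Type*} [MeasurableSpace Ω'] (P' : Measure Ω') [IsProbabilityMeasure P']
  [Fintype α] [MeasurableSpace α] [MeasurableSingletonClass α]

private lemma aux_rep {g : Ω' → α} (φ : α → ℝ) :
    (fun ω => φ (g ω)) = fun ω => ∑ a : α, Set.indicator (g ⁻¹' {a}) (fun _ => φ a) ω := by
  funext ω
  rw [Finset.sum_eq_single (g ω)]
  · simp [Set.indicator_apply]
  · intro b _ hb
    have hb' : g ω ≠ b := Ne.symm hb
    simp [Set.indicator_apply, hb']
  · intro h; exact absurd (Finset.mem_univ _) h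

private lemma aux_integrable_comp {g : Ω' → α} (hg : Measurable g) (φ : α → ℝ) :
    Integrable (fun ω => φ (g ω)) P' := by
  rw [aux_rep φ]
  exact integrable_finset_sum _ fun a _ =>
    (integrable_const _).indicator (hg (measurableSet_singleton a))

private lemma aux_integral_comp {g : Ω' → α} (hg : Measurable g) (φ : α → ℝ) :
    ∫ ω, φ (g ω) ∂P' = ∑ a : α, (P' (g ⁻¹' {a})).toReal * φ a := by
  rw [aux_rep φ, integral_finset_sum]
  · exact Finset.sum_congr rfl fun a _ => by
      rw [integral_indicator_const _ (hg (measurableSet_singleton a)), smul_eq_mul, measureReal_def]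
  · exact fun a _ => (integrable_const _).indicator (hg (measurableSet_singleton a))

end Aux

/-- One-step subsampling variance identity for the *union coupling* in
multilevel SGLD: the coarse minibatch is a uniform `s`-element subset `S` of
the `2s` fine indices, independent of the fine minibatches `τ`, and
`E‖T₁ + T₂ − T₃‖² = (2s/N) Σ_i ‖v_i‖² − (2s/N²) ‖Σ_i v_i‖²`. -/
theorem sgld_union_coupling_identity
    {Ω : Type*} [mΩ : MeasurableSpace Ω] (P : Measure Ω) [IsProbabilityMeasure P]
    {d : ℕ} (hd : 1 ≤ d) (N s : ℕ) (hN : 1 ≤ N) (hs : 1 ≤ s)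
    (v : Fin N → EuclideanSpace ℝ (Fin d))
    (τ : Fin (s + s) → Ω → Fin N)
    (S : Ω → Finset (Fin (s + s)))
    (hτ_meas : ∀ j, Measurable (τ j))
    (hS_meas : @Measurable Ω (Finset (Fin (s + s))) mΩ ⊤ S)
    (hτ_iid : ProbabilityTheory.iIndepFun τ P)
    (hτ_unif : ∀ (j : Fin (s + s)) (i : Fin N), P (τ j ⁻¹' {i}) = (N : ENNReal)⁻¹)
    (hS_card : ∀ ω, (S ω).card = s)
    (hS_unif : ∀ A : Finset (Fin (s + s)), A.card = s →
      P (S ⁻¹' {A}) = ((s + s).choose s : ENNReal)⁻¹)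
    (hS_indep : ProbabilityTheory.Indep
      (MeasurableSpace.comap (fun ω (j : Fin (s + s)) => τ j ω) MeasurableSpace.pi)
      (MeasurableSpace.comap S ⊤) P) :
    (∫ ω, ‖(∑ j : Fin s, v (τ (Fin.castAdd s j) ω)) +
            (∑ j : Fin s, v (τ (Fin.natAdd s j) ω)) -
            (2:ℝ) • ∑ k ∈ S ω, v (τ k ω)‖ ^ 2 ∂P) =
      (2 * (s : ℝ) / N) * ∑ i : Fin N, ‖v i‖ ^ 2 -
      (2 * (s : ℝ) / N ^ 2) * ‖∑ i : Fin N, v i‖ ^ 2 := by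
  classical
  letI : MeasurableSpace (Finset (Fin (s + s))) := ⊤
  haveI : MeasurableSingletonClass (Finset (Fin (s + s))) := ⟨fun _ => trivial⟩
  set c : Ω → Fin (s + s) → ℝ := fun ω j => if j ∈ S ω then (-1 : ℝ) else 1 with hc
  set F : Fin (s + s) → Fin (s + s) → Ω → ℝ :=
    fun j k ω => (c ω j * c ω k) * (inner ℝ (v (τ j ω)) (v (τ k ω)) : ℝ) with hF
  have hNne : (N : ℝ) ≠ 0 := Nat.cast_ne_zero.mpr (Nat.one_le_iff_ne_zero.mp hN)
  -- pointwise expansion of the squared norm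
  have hpt : ∀ ω, ‖(∑ j : Fin s, v (τ (Fin.castAdd s j) ω)) +
            (∑ j : Fin s, v (τ (Fin.natAdd s j) ω)) -
            (2:ℝ) • ∑ k ∈ S ω, v (τ k ω)‖ ^ 2
      = ∑ j : Fin (s + s), ∑ k : Fin (s + s), F j k ω := by
    intro ω
    have h1 : (∑ j : Fin s, v (τ (Fin.castAdd s j) ω)) +
            (∑ j : Fin s, v (τ (Fin.natAdd s j) ω)) -
            (2:ℝ) • ∑ k ∈ S ω, v (τ k ω)
        = ∑ j : Fin (s + s), c ω j • v (τ j ω) := by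
      rw [← Fin.sum_univ_add (fun j : Fin (s + s) => v (τ j ω))]
      have h2 : ∑ k ∈ S ω, v (τ k ω)
          = ∑ k : Fin (s + s), if k ∈ S ω then v (τ k ω) else 0 := by
        rw [Finset.sum_ite_mem, Finset.univ_inter]
      rw [h2, Finset.smul_sum, ← Finset.sum_sub_distrib]
      refine Finset.sum_congr rfl fun j _ => ?_
      by_cases h : j ∈ S ω
      · simp only [hc, h, if_true, smul_ite, smul_zero]
        rw [show v (τ j ω) - (2:ℝ) • v (τ j ω) = ((1:ℝ) - 2) • v (τ j ω) by
          rw [sub_smul, one_smul]]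
        norm_num
      · simp [hc, h]
    rw [h1, ← real_inner_self_eq_norm_sq, sum_inner]
    refine Finset.sum_congr rfl fun j _ => ?_
    rw [inner_sum]
    refine Finset.sum_congr rfl fun k _ => ?_
    rw [real_inner_smul_left, real_inner_smul_right, hF]
    ring
  -- integrability of each term
  have hF_int : ∀ j k, Integrable (F j k) P := by
    intro j k
    have : F j k = fun ω =>
        (fun p : Finset (Fin (s + s)) × Fin N × Fin N =>
          ((if j ∈ p.1 then (-1:ℝ) else 1) * (if k ∈ p.1 then (-1:ℝ) else 1)) *
            (inner ℝ (v p.2.1) (v p.2.2) : ℝ)) (S ω, τ j ω, τ k ω) := rfl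
    rw [this]
    exact aux_integrable_comp P (hS_meas.prodMk ((hτ_meas j).prodMk (hτ_meas k)))
      (fun p : Finset (Fin (s + s)) × Fin N × Fin N =>
        ((if j ∈ p.1 then (-1:ℝ) else 1) * (if k ∈ p.1 then (-1:ℝ) else 1)) *
          (inner ℝ (v p.2.1) (v p.2.2) : ℝ))
  -- swap integral and sums
  have hswap : (∫ ω, ‖(∑ j : Fin s, v (τ (Fin.castAdd s j) ω)) +
            (∑ j : Fin s, v (τ (Fin.natAdd s j) ω)) -
            (2:ℝ) • ∑ k ∈ S ω, v (τ k ω)‖ ^ 2 ∂P)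
      = ∑ j : Fin (s + s), ∑ k : Fin (s + s), ∫ ω, F j k ω ∂P := by
    rw [integral_congr_ae (Filter.Eventually.of_forall hpt),
      integral_finset_sum _ (fun j _ => integrable_finset_sum _ fun k _ => hF_int j k)]
    exact Finset.sum_congr rfl fun j _ => integral_finset_sum _ fun k _ => hF_int j k
  -- diagonal terms
  have hdiag : ∀ j, ∫ ω, F j j ω ∂P = (N:ℝ)⁻¹ * ∑ i : Fin N, ‖v i‖ ^ 2 := by
    intro j
    have h1 : ∀ ω, F j j ω = (fun i : Fin N => ‖v i‖ ^ 2) (τ j ω) := by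
      intro ω
      simp only [hF, hc]
      have hcc : (if j ∈ S ω then (-1:ℝ) else 1) * (if j ∈ S ω then (-1:ℝ) else 1) = 1 := by
        by_cases h : j ∈ S ω <;> simp [h]
      rw [hcc, one_mul]
      exact real_inner_self_eq_norm_sq _
    rw [integral_congr_ae (Filter.Eventually.of_forall h1),
      aux_integral_comp P (hτ_meas j) (fun i : Fin N => ‖v i‖ ^ 2)]
    rw [Finset.mul_sum]
    refine Finset.sum_congr rfl fun i _ => ?_
    rw [hτ_unif j i, ENNReal.toReal_inv, ENNReal.toReal_natCast]
  -- off-diagonal: expectation of the inner-product part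
  have hoff : ∀ j k, j ≠ k →
      ∫ ω, (inner ℝ (v (τ j ω)) (v (τ k ω)) : ℝ) ∂P
        = ((N:ℝ)⁻¹ * (N:ℝ)⁻¹) * ‖∑ i : Fin N, v i‖ ^ 2 := by
    intro j k hjk
    have h1 : ∀ ω, (inner ℝ (v (τ j ω)) (v (τ k ω)) : ℝ)
        = (fun p : Fin N × Fin N => (inner ℝ (v p.1) (v p.2) : ℝ)) (τ j ω, τ k ω) :=
      fun ω => rfl
    rw [integral_congr_ae (Filter.Eventually.of_forall h1),
      aux_integral_comp P ((hτ_meas j).prodMk (hτ_meas k))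
        (fun p : Fin N × Fin N => (inner ℝ (v p.1) (v p.2) : ℝ))]
    have hP : ∀ p : Fin N × Fin N,
        P ((fun ω => (τ j ω, τ k ω)) ⁻¹' {p}) = (N : ENNReal)⁻¹ * (N : ENNReal)⁻¹ := by
      intro p
      have hset : ((fun ω => (τ j ω, τ k ω)) ⁻¹' {p}) = τ j ⁻¹' {p.1} ∩ τ k ⁻¹' {p.2} := by
        ext ω; simp [Prod.ext_iff]
      rw [hset, (hτ_iid.indepFun hjk).measure_inter_preimage_eq_mul
        _ _ (measurableSet_singleton _) (measurableSet_singleton _), hτ_unif, hτ_unif]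
    have h2 : ∀ p : Fin N × Fin N,
        (P ((fun ω => (τ j ω, τ k ω)) ⁻¹' {p})).toReal = (N:ℝ)⁻¹ * (N:ℝ)⁻¹ := by
      intro p
      rw [hP p, ENNReal.toReal_mul, ENNReal.toReal_inv, ENNReal.toReal_natCast]
    calc ∑ p : Fin N × Fin N, (P ((fun ω => (τ j ω, τ k ω)) ⁻¹' {p})).toReal *
          (inner ℝ (v p.1) (v p.2) : ℝ)
        = ∑ p : Fin N × Fin N, ((N:ℝ)⁻¹ * (N:ℝ)⁻¹) * (inner ℝ (v p.1) (v p.2) : ℝ) :=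
          Finset.sum_congr rfl fun p _ => by rw [h2 p]
      _ = ((N:ℝ)⁻¹ * (N:ℝ)⁻¹) * ∑ p : Fin N × Fin N, (inner ℝ (v p.1) (v p.2) : ℝ) := by
          rw [Finset.mul_sum]
      _ = ((N:ℝ)⁻¹ * (N:ℝ)⁻¹) * ‖∑ i : Fin N, v i‖ ^ 2 := by
          rw [← real_inner_self_eq_norm_sq, sum_inner, Fintype.sum_prod_type]
          congr 1
          exact Finset.sum_congr rfl fun i _ => by rw [inner_sum]
  -- factorization of off-diagonal terms using independence
  have hc_int : ∀ j k : Fin (s + s), Integrable (fun ω => c ω j * c ω k) P := by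
    intro j k
    have : (fun ω => c ω j * c ω k) = fun ω =>
        (fun A : Finset (Fin (s + s)) =>
          (if j ∈ A then (-1:ℝ) else 1) * (if k ∈ A then (-1:ℝ) else 1)) (S ω) := rfl
    rw [this]
    exact aux_integrable_comp P hS_meas (fun A : Finset (Fin (s + s)) =>
      (if j ∈ A then (-1:ℝ) else 1) * (if k ∈ A then (-1:ℝ) else 1))
  have hinner_int : ∀ j k : Fin (s + s),
      Integrable (fun ω => (inner ℝ (v (τ j ω)) (v (τ k ω)) : ℝ)) P := by
    intro j k
    have : (fun ω => (inner ℝ (v (τ j ω)) (v (τ k ω)) : ℝ)) = fun ω =>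
        (fun p : Fin N × Fin N => (inner ℝ (v p.1) (v p.2) : ℝ)) (τ j ω, τ k ω) := rfl
    rw [this]
    exact aux_integrable_comp P ((hτ_meas j).prodMk (hτ_meas k))
      (fun p : Fin N × Fin N => (inner ℝ (v p.1) (v p.2) : ℝ))
  have hfact : ∀ j k, j ≠ k → ∫ ω, F j k ω ∂P
      = (∫ ω, c ω j * c ω k ∂P) * (((N:ℝ)⁻¹ * (N:ℝ)⁻¹) * ‖∑ i : Fin N, v i‖ ^ 2) := by
    intro j k hjk
    have base : ProbabilityTheory.IndepFun (fun ω (j : Fin (s + s)) => τ j ω) S P := hS_indep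
    have hind : ProbabilityTheory.IndepFun (fun ω => c ω j * c ω k)
        (fun ω => (inner ℝ (v (τ j ω)) (v (τ k ω)) : ℝ)) P := by
      have hH : Measurable (fun t : Fin (s + s) → Fin N => (inner ℝ (v (t j)) (v (t k)) : ℝ)) :=
        measurable_of_finite _
      have hG : Measurable (fun A : Finset (Fin (s + s)) =>
          (if j ∈ A then (-1:ℝ) else 1) * (if k ∈ A then (-1:ℝ) else 1)) :=
        measurable_from_top
      exact (base.comp hH hG).symm
    rw [← hoff j k hjk]
    exact ProbabilityTheory.IndepFun.integral_mul_eq_mul_integral hind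
      (hc_int j k).aestronglyMeasurable (hinner_int j k).aestronglyMeasurable
  -- the sum of the sign covariances is deterministic
  have hcsum : ∀ ω, ∑ j : Fin (s + s), ∑ k ∈ Finset.univ.erase j, c ω j * c ω k
      = -((s : ℝ) + s) := by
    intro ω
    have hT : ∑ k : Fin (s + s), c ω k = 0 := by
      rw [← Finset.sum_add_sum_compl (S ω)]
      have h1 : ∑ k ∈ S ω, c ω k = -(s : ℝ) := by
        rw [Finset.sum_congr rfl (fun k hk => by simp [hc, hk] : ∀ k ∈ S ω, c ω k = -1)]
        simp [hS_card ω]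
      have h2 : ∑ k ∈ (S ω)ᶜ, c ω k = (s : ℝ) := by
        rw [Finset.sum_congr rfl (fun k hk => by
          simp only [Finset.mem_compl] at hk
          simp [hc, hk] : ∀ k ∈ (S ω)ᶜ, c ω k = 1)]
        simp [Finset.card_compl, hS_card ω]
      rw [h1, h2]; ring
    have hsq : ∀ k, c ω k * c ω k = 1 := by
      intro k; by_cases h : k ∈ S ω <;> simp [hc, h]
    calc ∑ j : Fin (s + s), ∑ k ∈ Finset.univ.erase j, c ω j * c ω k
        = ∑ j : Fin (s + s), ((∑ k : Fin (s + s), c ω j * c ω k) - c ω j * c ω j) :=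
          Finset.sum_congr rfl fun j _ =>
            Finset.sum_erase_eq_sub (Finset.mem_univ j)
      _ = ∑ j : Fin (s + s), (c ω j * 0 - 1) := Finset.sum_congr rfl fun j _ => by
          rw [← Finset.mul_sum, hT, hsq]
      _ = -((s : ℝ) + s) := by
          simp only [mul_zero, zero_sub]
          rw [Finset.sum_const]
          simp [Finset.card_univ]
  have hsum_c : ∑ j : Fin (s + s), ∑ k ∈ Finset.univ.erase j, ∫ ω, c ω j * c ω k ∂P
      = -((s : ℝ) + s) := by
    have h1 : ∑ j : Fin (s + s), ∑ k ∈ Finset.univ.erase j, ∫ ω, c ω j * c ω k ∂P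
        = ∫ ω, ∑ j : Fin (s + s), ∑ k ∈ Finset.univ.erase j, c ω j * c ω k ∂P := by
      rw [integral_finset_sum _ (fun j _ => integrable_finset_sum _ fun k _ => hc_int j k)]
      exact Finset.sum_congr rfl fun j _ =>
        (integral_finset_sum _ fun k _ => hc_int j k).symm
    rw [h1, integral_congr_ae (Filter.Eventually.of_forall hcsum), integral_const]
    simp
  -- assemble everything
  rw [hswap]
  have hsplit : ∑ j : Fin (s + s), ∑ k : Fin (s + s), ∫ ω, F j k ω ∂P
      = (∑ j : Fin (s + s), ∫ ω, F j j ω ∂P) +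
        ∑ j : Fin (s + s), ∑ k ∈ Finset.univ.erase j, ∫ ω, F j k ω ∂P := by
    rw [← Finset.sum_add_distrib]
    exact Finset.sum_congr rfl fun j _ =>
      (Finset.add_sum_erase _ _ (Finset.mem_univ j)).symm
  rw [hsplit]
  have hdiag_sum : ∑ j : Fin (s + s), ∫ ω, F j j ω ∂P
      = ((s : ℝ) + s) * ((N:ℝ)⁻¹ * ∑ i : Fin N, ‖v i‖ ^ 2) := by
    rw [Finset.sum_congr rfl fun j _ => hdiag j, Finset.sum_const, Finset.card_univ]
    simp [nsmul_eq_mul]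
  have hoff_sum : ∑ j : Fin (s + s), ∑ k ∈ Finset.univ.erase j, ∫ ω, F j k ω ∂P
      = -((s : ℝ) + s) * (((N:ℝ)⁻¹ * (N:ℝ)⁻¹) * ‖∑ i : Fin N, v i‖ ^ 2) := by
    have h1 : ∀ j : Fin (s + s), ∀ k ∈ Finset.univ.erase j,
        ∫ ω, F j k ω ∂P = (∫ ω, c ω j * c ω k ∂P) *
          (((N:ℝ)⁻¹ * (N:ℝ)⁻¹) * ‖∑ i : Fin N, v i‖ ^ 2) := by
      intro j k hk
      exact hfact j k (Ne.symm (Finset.ne_of_mem_erase hk))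
    calc ∑ j : Fin (s + s), ∑ k ∈ Finset.univ.erase j, ∫ ω, F j k ω ∂P
        = ∑ j : Fin (s + s), ∑ k ∈ Finset.univ.erase j, (∫ ω, c ω j * c ω k ∂P) *
            (((N:ℝ)⁻¹ * (N:ℝ)⁻¹) * ‖∑ i : Fin N, v i‖ ^ 2) :=
          Finset.sum_congr rfl fun j _ => Finset.sum_congr rfl fun k hk => h1 j k hk
      _ = (∑ j : Fin (s + s), ∑ k ∈ Finset.univ.erase j, ∫ ω, c ω j * c ω k ∂P) *
            (((N:ℝ)⁻¹ * (N:ℝ)⁻¹) * ‖∑ i : Fin N, v i‖ ^ 2) := by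
          rw [Finset.sum_mul]
          exact Finset.sum_congr rfl fun j _ => by rw [Finset.sum_mul]
      _ = -((s : ℝ) + s) * (((N:ℝ)⁻¹ * (N:ℝ)⁻¹) * ‖∑ i : Fin N, v i‖ ^ 2) := by
          rw [hsum_c]
  rw [hdiag_sum, hoff_sum]
  field_simp
  ring
end

section
/- Let (Ω, 𝓕, P) be a probability space, let (Δ_j)_{j≥0} be integrable real-valued random variables, and let M : Ω → ℕ be a random variable independent of the σ-algebra generated by (Δ_j)_{j≥0}, such that P(M ≥ j) > 0 for every j ∈ ℕ and Σ_{j=0}^∞ E|Δ_j| / P(M ≥ j) < ∞. Then the random variable Z := Σ_{j=0}^{M} Δ_j / P(M ≥ j) is integrable and E[Z] = Σ_{j=0}^∞ E[Δ_j]. -/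
open MeasureTheory

/-- Randomized-truncation (unbiasing) identity: if the random truncation level
`M` is independent of the multilevel corrections `(Δ_j)` and the weighted sum
of first absolute moments converges, then `Z = Σ_{j=0}^{M} Δ_j / P(M ≥ j)` is
integrable with `E[Z] = Σ_j E[Δ_j]`. -/
theorem randomized_unbiasing
    {Ω : Type*} [MeasurableSpace Ω] (P : Measure Ω) [IsProbabilityMeasure P]
    (Δ : ℕ → Ω → ℝ)
    (hΔ_int : ∀ j, Integrable (Δ j) P)
    (M : Ω → ℕ) (hM_meas : Measurable M)
    (hM_indep : ProbabilityTheory.Indep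
      (MeasurableSpace.comap M inferInstance)
      (⨆ j : ℕ, MeasurableSpace.comap (Δ j) inferInstance) P)
    (hM_pos : ∀ j : ℕ, 0 < P {ω | j ≤ M ω})
    (h_sum : Summable fun j : ℕ =>
      (∫ ω, |Δ j ω| ∂P) / (P {ω | j ≤ M ω}).toReal) :
    Integrable (fun ω => ∑ j ∈ Finset.range (M ω + 1),
        Δ j ω / (P {ω' | j ≤ M ω'}).toReal) P ∧
    (∫ ω, (∑ j ∈ Finset.range (M ω + 1),
        Δ j ω / (P {ω' | j ≤ M ω'}).toReal) ∂P) =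
      ∑' j : ℕ, ∫ ω, Δ j ω ∂P := by
  classical
  set p : ℕ → ℝ := fun j => (P {ω | j ≤ M ω}).toReal with hp_def
  have hSmeas : ∀ j : ℕ, MeasurableSet {ω | j ≤ M ω} := fun j =>
    hM_meas (measurableSet_Ici (a := j))
  have hp_pos : ∀ j, 0 < p j := fun j =>
    ENNReal.toReal_pos (hM_pos j).ne' (measure_ne_top P _)
  have hp_le_one : ∀ j, p j ≤ 1 := fun j => by
    have h := ENNReal.toReal_mono (by simp) (prob_le_one (μ := P) (s := {ω | j ≤ M ω}))
    simpa using h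
  -- the real-valued indicator of the event {j ≤ M}
  set X : ℕ → Ω → ℝ := fun j => Set.indicator {ω | j ≤ M ω} (fun _ => (1 : ℝ)) with hX_def
  have hX_meas : ∀ j, Measurable (X j) := fun j =>
    measurable_const.indicator (hSmeas j)
  have hX_nonneg : ∀ j ω, 0 ≤ X j ω := fun j ω =>
    Set.indicator_nonneg (fun _ _ => zero_le_one) ω
  have hX_le_one : ∀ j ω, X j ω ≤ 1 := fun j ω => by
    by_cases h : ω ∈ {ω | j ≤ M ω} <;> simp [hX_def, Set.indicator_apply, h]
  have hX_int : ∀ j, ∫ ω, X j ω ∂P = p j := fun j => by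
    rw [hX_def]
    simp [integral_indicator_const (1 : ℝ) (hSmeas j)]; rfl
  -- independence of X j and Δ j
  have hIndep : ∀ j, ProbabilityTheory.IndepFun (X j) (Δ j) P := by
    intro j
    have hMΔ : ProbabilityTheory.IndepFun M (Δ j) P := by
      rw [ProbabilityTheory.IndepFun_iff_Indep]
      exact ProbabilityTheory.indep_of_indep_of_le_right hM_indep
        (le_iSup (fun j => MeasurableSpace.comap (Δ j) inferInstance) j)
    have hXcomp : X j = (Set.indicator (Set.Ici j) (fun _ => (1 : ℝ))) ∘ M := by
      funext ω
      by_cases h : j ≤ M ω <;>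
        simp [hX_def, Set.indicator_apply, h, Function.comp]
    rw [hXcomp]
    exact hMΔ.comp (measurable_const.indicator measurableSet_Ici) measurable_id
  -- key independence identity
  have hkey : ∀ j, ∫ ω, X j ω * Δ j ω ∂P = p j * ∫ ω, Δ j ω ∂P := by
    intro j
    have := (hIndep j).integral_mul_eq_mul_integral (hX_meas j).aestronglyMeasurable
      (hΔ_int j).aestronglyMeasurable
    calc ∫ ω, X j ω * Δ j ω ∂P = ∫ ω, (X j * Δ j) ω ∂P := rfl
      _ = (∫ ω, X j ω ∂P) * ∫ ω, Δ j ω ∂P := this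
      _ = p j * ∫ ω, Δ j ω ∂P := by rw [hX_int j]
  have hkey_abs : ∀ j, ∫ ω, X j ω * |Δ j ω| ∂P = p j * ∫ ω, |Δ j ω| ∂P := by
    intro j
    have hind : ProbabilityTheory.IndepFun (X j) (fun ω => |Δ j ω|) P := by
      have := (hIndep j).comp (measurable_id (α := ℝ)) (measurable_norm (α := ℝ))
      simpa [Function.comp_def, Real.norm_eq_abs] using this
    have := hind.integral_mul_eq_mul_integral (hX_meas j).aestronglyMeasurable
      (hΔ_int j).abs.aestronglyMeasurable
    calc ∫ ω, X j ω * |Δ j ω| ∂P = ∫ ω, (X j * fun ω => |Δ j ω|) ω ∂P := rfl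
      _ = (∫ ω, X j ω ∂P) * ∫ ω, |Δ j ω| ∂P := this
      _ = p j * ∫ ω, |Δ j ω| ∂P := by rw [hX_int j]
  -- the summands
  set f : ℕ → Ω → ℝ := fun j ω => X j ω * Δ j ω / p j with hf_def
  have hf_int : ∀ j, Integrable (f j) P := by
    intro j
    have hb : ∀ ω, ‖X j ω‖ ≤ 1 := fun ω => by
      simpa [Real.norm_eq_abs, abs_of_nonneg (hX_nonneg j ω)] using hX_le_one j ω
    exact (((hΔ_int j).bdd_mul (c := 1) (hX_meas j).aestronglyMeasurable
      (Filter.Eventually.of_forall hb)).div_const (p j))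
  have hf_meas : ∀ j, AEStronglyMeasurable (f j) P := fun j =>
    (hf_int j).aestronglyMeasurable
  -- ∫ |f j| = ∫ |Δ j|
  have hf_abs : ∀ j, ∫ ω, |f j ω| ∂P = ∫ ω, |Δ j ω| ∂P := by
    intro j
    have h1 : ∀ ω, |f j ω| = X j ω * |Δ j ω| / p j := by
      intro ω
      rw [hf_def]
      rw [abs_div, abs_mul, abs_of_nonneg (hX_nonneg j ω),
        abs_of_pos (hp_pos j)]
    calc ∫ ω, |f j ω| ∂P = ∫ ω, X j ω * |Δ j ω| / p j ∂P := by
          exact integral_congr_ae (Filter.Eventually.of_forall h1)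
      _ = (∫ ω, X j ω * |Δ j ω| ∂P) / p j := integral_div _ _
      _ = (p j * ∫ ω, |Δ j ω| ∂P) / p j := by rw [hkey_abs j]
      _ = ∫ ω, |Δ j ω| ∂P := mul_div_cancel_left₀ _ (hp_pos j).ne'
  -- summability of ∫ |Δ j|
  have h_abs_nonneg : ∀ j, 0 ≤ ∫ ω, |Δ j ω| ∂P := fun j =>
    integral_nonneg fun ω => abs_nonneg _
  have h_sum' : Summable fun j => ∫ ω, |Δ j ω| ∂P := by
    refine Summable.of_nonneg_of_le h_abs_nonneg (fun j => ?_) h_sum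
    rw [le_div_iff₀ (hp_pos j)]
    exact mul_le_of_le_one_right (h_abs_nonneg j) (hp_le_one j)
  -- lintegral bound
  have h_lint : ∀ j, ∫⁻ ω, ‖f j ω‖₊ ∂P = ENNReal.ofReal (∫ ω, |Δ j ω| ∂P) := by
    intro j
    show ∫⁻ ω, ‖f j ω‖ₑ ∂P = _
    rw [← ofReal_integral_norm_eq_lintegral_enorm (hf_int j)]
    congr 1
    rw [← hf_abs j]
    exact integral_congr_ae (Filter.Eventually.of_forall fun ω => Real.norm_eq_abs _)
  have htop : (∑' j, ∫⁻ ω, ‖f j ω‖₊ ∂P) ≠ ⊤ := by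
    simp_rw [h_lint]
    rw [← ENNReal.ofReal_tsum_of_nonneg h_abs_nonneg h_sum']
    exact ENNReal.ofReal_ne_top
  -- a.e. summability
  have hae : ∀ᵐ ω ∂P, Summable fun j => f j ω := by
    have hmeas' : ∀ j, AEMeasurable (fun ω => (‖f j ω‖₊ : ENNReal)) P := fun j =>
      (hf_meas j).enorm
    have hlt : ∫⁻ ω, ∑' j, (‖f j ω‖₊ : ENNReal) ∂P ≠ ⊤ := by
      rw [lintegral_tsum hmeas']
      exact htop
    filter_upwards [ae_lt_top' (AEMeasurable.ennreal_tsum hmeas') hlt] with ω hω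
    have hs : Summable fun j => (‖f j ω‖₊ : NNReal) := by
      rw [← ENNReal.tsum_coe_ne_top_iff_summable]
      exact hω.ne
    refine Summable.of_norm ?_
    simpa [← NNReal.summable_coe, coe_nnnorm] using hs
  -- pointwise identification of Z with the tsum
  have hZeq : (fun ω => ∑ j ∈ Finset.range (M ω + 1), Δ j ω / p j)
      = fun ω => ∑' j, f j ω := by
    funext ω
    rw [tsum_eq_sum (s := Finset.range (M ω + 1)) (f := fun j => f j ω)
      (fun j hj => by
        have : ¬ j ≤ M ω := by
          simpa [Nat.lt_succ_iff] using hj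
        simp [hf_def, hX_def, Set.indicator_apply, this])]
    refine Finset.sum_congr rfl fun j hj => ?_
    have : j ≤ M ω := by simpa [Nat.lt_succ_iff] using hj
    simp [hf_def, hX_def, Set.indicator_apply, this]
  -- integrability of Z
  have hZ_meas : AEStronglyMeasurable (fun ω => ∑' j, f j ω) P := by
    refine aestronglyMeasurable_of_tendsto_ae (f := fun n ω => ∑ j ∈ Finset.range n, f j ω)
      Filter.atTop (fun n => Finset.aestronglyMeasurable_fun_sum _ fun j _ => hf_meas j) ?_
    filter_upwards [hae] with ω hω
    exact hω.hasSum.tendsto_sum_nat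
  have hZ_int : Integrable (fun ω => ∑' j, f j ω) P := by
    refine ⟨hZ_meas, ?_⟩
    show (∫⁻ ω, ‖∑' j, f j ω‖₊ ∂P) < ⊤
    calc ∫⁻ ω, ‖∑' j, f j ω‖₊ ∂P
        ≤ ∫⁻ ω, ∑' j, (‖f j ω‖₊ : ENNReal) ∂P := by
          refine lintegral_mono_ae ?_
          filter_upwards [hae] with ω hω
          have hsn : Summable fun j => ‖f j ω‖₊ := by
            have := hω.abs
            rw [← NNReal.summable_coe]
            simpa [coe_nnnorm, Real.norm_eq_abs] using this
          calc (‖∑' j, f j ω‖₊ : ENNReal) ≤ ((∑' j, ‖f j ω‖₊ : NNReal) : ENNReal) := by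
                exact_mod_cast nnnorm_tsum_le hsn
            _ = ∑' j, (‖f j ω‖₊ : ENNReal) := ENNReal.coe_tsum hsn
      _ = ∑' j, ∫⁻ ω, ‖f j ω‖₊ ∂P := lintegral_tsum fun j => (hf_meas j).enorm
      _ < ⊤ := htop.lt_top
  -- integral of each f j
  have hf_integral : ∀ j, ∫ ω, f j ω ∂P = ∫ ω, Δ j ω ∂P := by
    intro j
    calc ∫ ω, f j ω ∂P = (∫ ω, X j ω * Δ j ω ∂P) / p j := integral_div _ _
      _ = (p j * ∫ ω, Δ j ω ∂P) / p j := by rw [hkey j]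
      _ = ∫ ω, Δ j ω ∂P := mul_div_cancel_left₀ _ (hp_pos j).ne'
  refine ⟨?_, ?_⟩
  · rw [show (fun ω => ∑ j ∈ Finset.range (M ω + 1),
        Δ j ω / (P {ω' | j ≤ M ω'}).toReal) = fun ω => ∑' j, f j ω from hZeq]
    exact hZ_int
  · calc (∫ ω, (∑ j ∈ Finset.range (M ω + 1),
        Δ j ω / (P {ω' | j ≤ M ω'}).toReal) ∂P)
        = ∫ ω, ∑' j, f j ω ∂P := by rw [hZeq]
      _ = ∑' j, ∫ ω, f j ω ∂P := integral_tsum hf_meas htop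
      _ = ∑' j, ∫ ω, Δ j ω ∂P := tsum_congr hf_integral
end
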